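/- arXiv:2506.06503 — 8 statements merged into one kernel-verified Lean document; each statement's English description precedes it below -/
import Mathlib

section
/- Let X and Y be totally disconnected locally compact Hausdorff spaces. Then the canonical linear map γ : C_c^∞(X) ⊗ C_c^∞(Y) → C_c^∞(X × Y), defined by γ(f ⊗ g)(x,y) = f(x)g(y), is a linear isomorphism. -/
open TensorProduct

set_option maxHeartbeats 1000000
set_option synthInstance.maxHeartbeats 400000
set_option maxRecDepth 8000

theorem HasCompactSupport.add' {Z : Type*} [TopologicalSpace Z] {f g : Z → ℂ}
    (hf : HasCompactSupport f) (hg : HasCompactSupport g) : HasCompactSupport (f + g) :=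
  (hf.union hg).of_isClosed_subset isClosed_closure
    ((closure_mono (Function.support_add f g)).trans (le_of_eq closure_union))

theorem IsLocallyConstant.csmul {Z : Type*} [TopologicalSpace Z] {f : Z → ℂ} (c : ℂ)
    (hf : IsLocallyConstant f) : IsLocallyConstant (c • f) := by
  have : c • f = fun x => c * f x := by funext x; simp
  rw [this]
  exact hf.comp (c * ·)

/-- The space `C_c^∞(Z)` of locally constant compactly supported `ℂ`-valued functions,
as a `ℂ`-submodule of the function space. -/
noncomputable def Cc (Z : Type) [TopologicalSpace Z] : Submodule ℂ (Z → ℂ) where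
  carrier := {f | IsLocallyConstant f ∧ HasCompactSupport f}
  add_mem' := fun hf hg => ⟨hf.1.add hg.1, hf.2.add' hg.2⟩
  zero_mem' := ⟨IsLocallyConstant.const 0, by
    simp only [HasCompactSupport, tsupport]; simpa using isCompact_empty⟩
  smul_mem' := fun c f hf =>
    ⟨IsLocallyConstant.csmul c hf.1, hf.2.mono (Function.support_const_smul_subset c f)⟩

/-- The canonical bilinear map `C_c^∞(X) × C_c^∞(Y) → (X × Y → ℂ)`,
`(f, g) ↦ ((x,y) ↦ f(x)g(y))`. -/
noncomputable def gammaBil (X Y : Type) [TopologicalSpace X] [TopologicalSpace Y] :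
    Cc X →ₗ[ℂ] Cc Y →ₗ[ℂ] ((X × Y) → ℂ) :=
  LinearMap.mk₂ ℂ (fun f g => fun p => (f : X → ℂ) p.1 * (g : Y → ℂ) p.2)
    (by intros f₁ f₂ g; funext p; simp [add_mul])
    (by intros c f g; funext p; simp [smul_eq_mul]; ring)
    (by intros f g₁ g₂; funext p; simp [mul_add])
    (by intros c f g; funext p; simp [smul_eq_mul]; ring)

/-- The canonical linear map `γ : C_c^∞(X) ⊗ C_c^∞(Y) → (X × Y → ℂ)`. -/
noncomputable def gammaMap (X Y : Type) [TopologicalSpace X] [TopologicalSpace Y] :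
    (Cc X ⊗[ℂ] Cc Y) →ₗ[ℂ] ((X × Y) → ℂ) :=
  TensorProduct.lift (gammaBil X Y)

/-! ### Auxiliary lemmas -/

lemma mem_Cc_iff {Z : Type} [TopologicalSpace Z] {f : Z → ℂ} :
    f ∈ Cc Z ↔ IsLocallyConstant f ∧ HasCompactSupport f := Iff.rfl

lemma gammaMap_tmul {X Y : Type} [TopologicalSpace X] [TopologicalSpace Y]
    (f : Cc X) (g : Cc Y) :
    gammaMap X Y (f ⊗ₜ[ℂ] g) = fun p => (f : X → ℂ) p.1 * (g : Y → ℂ) p.2 := rfl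

lemma exists_compactOpen {Z : Type} [TopologicalSpace Z] [T2Space Z] [LocallyCompactSpace Z]
    [TotallyDisconnectedSpace Z] {z : Z} {U : Set Z} (hU : IsOpen U) (hz : z ∈ U) :
    ∃ K : Set Z, IsCompact K ∧ IsOpen K ∧ z ∈ K ∧ K ⊆ U := by
  obtain ⟨s, hs, hzs, hsU⟩ := exists_compact_subset hU hz
  obtain ⟨V, hV, hzV, hVs⟩ := (loc_compact_Haus_tot_disc_of_zero_dim (H := Z)).mem_nhds_iff.mp
    (isOpen_interior.mem_nhds hzs)
  exact ⟨V, hs.of_isClosed_subset hV.1 (hVs.trans interior_subset), hV.2, hzV,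
    (hVs.trans interior_subset).trans hsU⟩

lemma indicator_lc {Z : Type} [TopologicalSpace Z] {K : Set Z} (hK : IsClopen K) :
    IsLocallyConstant (K.indicator (1 : Z → ℂ)) := by
  classical
  intro s
  have : K.indicator (1 : Z → ℂ) ⁻¹' s =
      (if (1:ℂ) ∈ s then K else ∅) ∪ (if (0:ℂ) ∈ s then Kᶜ else ∅) := by
    ext z
    by_cases hz : z ∈ K <;> split_ifs <;>
      simp_all [Set.indicator_apply, hz]
  rw [this]
  split_ifs <;>
    simp [hK.2, hK.1.isOpen_compl, IsOpen.union, isOpen_empty]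

lemma indicator_mem_Cc {Z : Type} [TopologicalSpace Z] [T2Space Z] {K : Set Z}
    (hc : IsCompact K) (ho : IsOpen K) : K.indicator (1 : Z → ℂ) ∈ Cc Z := by
  refine ⟨indicator_lc ⟨hc.isClosed, ho⟩, HasCompactSupport.intro hc ?_⟩
  intro z hz
  exact Set.indicator_of_notMem hz _

lemma indicator_union_eq {Z : Type} (A B : Set Z) :
    (A ∪ B).indicator (1 : Z → ℂ) =
      A.indicator 1 + B.indicator 1 - (A ∩ B).indicator 1 := by
  funext z
  by_cases hA : z ∈ A <;> by_cases hB : z ∈ B <;>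
    simp [Set.indicator_apply, hA, hB]

section Range

variable {X Y : Type} [TopologicalSpace X] [T2Space X] [LocallyCompactSpace X]
    [TotallyDisconnectedSpace X]
    [TopologicalSpace Y] [T2Space Y] [LocallyCompactSpace Y] [TotallyDisconnectedSpace Y]

lemma rect_mem_range {U : Set X} {V : Set Y}
    (hUc : IsCompact U) (hUo : IsOpen U) (hVc : IsCompact V) (hVo : IsOpen V) :
    (U ×ˢ V).indicator (1 : X × Y → ℂ) ∈ LinearMap.range (gammaMap X Y) := by
  refine ⟨(⟨U.indicator 1, indicator_mem_Cc hUc hUo⟩ : Cc X) ⊗ₜ[ℂ]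
    (⟨V.indicator 1, indicator_mem_Cc hVc hVo⟩ : Cc Y), ?_⟩
  rw [gammaMap_tmul]
  funext p
  by_cases h1 : p.1 ∈ U <;> by_cases h2 : p.2 ∈ V <;>
    simp [Set.indicator_apply, Set.mem_prod, h1, h2]

lemma union_rects_mem_range {ι : Type} (s : Finset ι) :
    ∀ (U : ι → Set X) (V : ι → Set Y),
    (∀ i, IsCompact (U i) ∧ IsOpen (U i) ∧ IsCompact (V i) ∧ IsOpen (V i)) →
    (⋃ i ∈ s, U i ×ˢ V i).indicator (1 : X × Y → ℂ) ∈ LinearMap.range (gammaMap X Y) := by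
  classical
  induction s using Finset.induction_on with
  | empty =>
    intro U V _
    simp only [Finset.notMem_empty, Set.iUnion_of_empty, Set.iUnion_empty,
      Set.indicator_empty]
    exact zero_mem _
  | insert a s ha ih =>
    intro U V h
    rw [Finset.set_biUnion_insert, indicator_union_eq]
    have hinter : (U a ×ˢ V a) ∩ (⋃ i ∈ s, U i ×ˢ V i)
        = ⋃ i ∈ s, (U a ∩ U i) ×ˢ (V a ∩ V i) := by
      rw [Set.inter_iUnion₂]
      refine Set.iUnion₂_congr fun i _ => ?_
      rw [Set.prod_inter_prod]
    rw [hinter]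
    refine sub_mem (add_mem (rect_mem_range (h a).1 (h a).2.1 (h a).2.2.1 (h a).2.2.2)
      (ih U V h)) (ih (fun i => U a ∩ U i) (fun i => V a ∩ V i) fun i => ?_)
    exact ⟨(h a).1.inter_right (h i).1.isClosed, (h a).2.1.inter (h i).2.1,
      (h a).2.2.1.inter_right (h i).2.2.1.isClosed, (h a).2.2.2.inter (h i).2.2.2⟩


lemma compactOpen_indicator_mem {W : Set (X × Y)} (hWc : IsCompact W) (hWo : IsOpen W) :
    W.indicator (1 : X × Y → ℂ) ∈ LinearMap.range (gammaMap X Y) := by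
  have hrect : ∀ z : W, ∃ K : Set X, ∃ L : Set Y,
      (IsCompact K ∧ IsOpen K ∧ IsCompact L ∧ IsOpen L) ∧
        (z : X × Y) ∈ K ×ˢ L ∧ K ×ˢ L ⊆ W := by
    rintro ⟨⟨x, y⟩, hz⟩
    obtain ⟨u, v, hu, hv, hxu, hyv, huv⟩ := isOpen_prod_iff.mp hWo x y hz
    obtain ⟨K, hKc, hKo, hxK, hKu⟩ := exists_compactOpen hu hxu
    obtain ⟨L, hLc, hLo, hyL, hLv⟩ := exists_compactOpen hv hyv
    exact ⟨K, L, ⟨hKc, hKo, hLc, hLo⟩, ⟨hxK, hyL⟩, (Set.prod_mono hKu hLv).trans huv⟩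
  choose K L hKL hmem hsub using hrect
  obtain ⟨t, ht⟩ := hWc.elim_finite_subcover (fun z : W => K z ×ˢ L z)
    (fun z => ((hKL z).2.1).prod ((hKL z).2.2.2))
    (fun z hz => Set.mem_iUnion.mpr ⟨⟨z, hz⟩, hmem _⟩)
  have hWeq : W = ⋃ z ∈ t, K z ×ˢ L z := by
    apply Set.Subset.antisymm
    · intro z hz
      obtain ⟨i, hi, hmemi⟩ := Set.mem_iUnion₂.mp (ht hz)
      exact Set.mem_biUnion hi hmemi
    · exact Set.iUnion₂_subset fun i _ => hsub i
  rw [hWeq]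
  exact union_rects_mem_range t K L fun i =>
    ⟨(hKL i).1, (hKL i).2.1, (hKL i).2.2.1, (hKL i).2.2.2⟩

lemma mem_range_of_mem_Cc {f : X × Y → ℂ} (hf : f ∈ Cc (X × Y)) :
    f ∈ LinearMap.range (gammaMap X Y) := by
  classical
  obtain ⟨hlc, hcs⟩ := hf
  obtain ⟨t, ht⟩ := hcs.elim_finite_subcover (fun c : ℂ => f ⁻¹' {c})
    (fun c => hlc {c}) (fun z _ => Set.mem_iUnion.mpr ⟨f z, rfl⟩)
  have hfibc : ∀ c : ℂ, IsCompact (f ⁻¹' {c}) ∨ c = 0 := by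
    intro c
    by_cases hc : c = 0
    · exact Or.inr hc
    · refine Or.inl (hcs.of_isClosed_subset (isClosed_singleton.preimage hlc.continuous) ?_)
      intro z hz
      apply subset_closure
      simp only [Set.mem_preimage, Set.mem_singleton_iff] at hz
      simp [Function.mem_support, hz, hc]
  have key : f = ∑ c ∈ t.erase 0, c • (f ⁻¹' {c}).indicator (1 : X × Y → ℂ) := by
    funext z
    rw [Finset.sum_apply]
    by_cases hz : f z = 0
    · rw [hz]
      symm
      refine Finset.sum_eq_zero fun c hc => ?_
      have hznot : z ∉ f ⁻¹' {c} := by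
        simp only [Set.mem_preimage, Set.mem_singleton_iff, hz]
        exact fun h => (Finset.mem_erase.mp hc).1 h.symm
      simp [Set.indicator_of_notMem hznot]
    · have hzt : f z ∈ t := by
        have hzs : z ∈ tsupport f := subset_closure hz
        obtain ⟨c, hc, hmemc⟩ := Set.mem_iUnion₂.mp (ht hzs)
        simp only [Set.mem_preimage, Set.mem_singleton_iff] at hmemc
        rwa [hmemc]
      rw [Finset.sum_eq_single_of_mem (f z) (Finset.mem_erase.mpr ⟨hz, hzt⟩)]
      · simp [Set.indicator_of_mem, Set.mem_preimage]
      · intro c _ hne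
        have hznot : z ∉ f ⁻¹' {c} := by
          simp only [Set.mem_preimage, Set.mem_singleton_iff]
          exact fun h => hne (h ▸ rfl)
        simp [Set.indicator_of_notMem hznot]
  rw [key]
  refine Submodule.sum_mem _ fun c hc => Submodule.smul_mem _ _ ?_
  have hcne : c ≠ 0 := (Finset.mem_erase.mp hc).1
  exact compactOpen_indicator_mem ((hfibc c).resolve_right hcne) (hlc {c})

lemma gamma_mem_Cc (t : Cc X ⊗[ℂ] Cc Y) : gammaMap X Y t ∈ Cc (X × Y) := by
  induction t using TensorProduct.induction_on with
  | zero => rw [map_zero]; exact zero_mem _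
  | tmul f g =>
    rw [gammaMap_tmul]
    obtain ⟨hflc, hfcs⟩ := f.2
    obtain ⟨hglc, hgcs⟩ := g.2
    refine ⟨?_, ?_⟩
    · exact (hflc.comp_continuous continuous_fst).mul (hglc.comp_continuous continuous_snd)
    · apply HasCompactSupport.intro (hfcs.prod hgcs)
      rintro ⟨x, y⟩ hxy
      by_cases hx : x ∈ tsupport ((f : Cc X) : X → ℂ)
      · have hy : y ∉ tsupport ((g : Cc Y) : Y → ℂ) := fun hy => hxy ⟨hx, hy⟩
        simp [image_eq_zero_of_notMem_tsupport hy]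
      · simp [image_eq_zero_of_notMem_tsupport hx]
  | add a b ha hb => rw [map_add]; exact add_mem ha hb

end Range

noncomputable def phiMap (X Y : Type) [TopologicalSpace X] [TopologicalSpace Y] (x : X) :
    (Cc X ⊗[ℂ] Cc Y) →ₗ[ℂ] Cc Y :=
  TensorProduct.lift (LinearMap.mk₂ ℂ (fun f g => ((f : Cc X) : X → ℂ) x • g)
    (by intros f₁ f₂ g; simp [add_smul])
    (by intros c f g; simp [smul_smul])
    (by intros f g₁ g₂; simp [smul_add])
    (by intros c f g; exact smul_comm _ _ _))

lemma phi_apply {X Y : Type} [TopologicalSpace X] [TopologicalSpace Y] (x : X)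
    (t : Cc X ⊗[ℂ] Cc Y) (y : Y) :
    ((phiMap X Y x t : Cc Y) : Y → ℂ) y = gammaMap X Y t (x, y) := by
  induction t using TensorProduct.induction_on with
  | zero => simp
  | tmul f g => rfl
  | add a b ha hb => simp [map_add, ha, hb]

lemma gammaMap_injective (X Y : Type) [TopologicalSpace X] [TopologicalSpace Y] :
    Function.Injective (gammaMap X Y) := by
  suffices hker : LinearMap.ker (gammaMap X Y) = ⊥ from (injective_iff_map_eq_zero _).mpr fun t ht =>
    (Submodule.eq_bot_iff _).mp hker t ht
  refine (Submodule.eq_bot_iff _).mpr fun t ht' => ?_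
  have ht : gammaMap X Y t = 0 := LinearMap.mem_ker.mp ht'
  classical
  set b : Module.Basis _ ℂ (Cc Y) := Module.Basis.ofVectorSpace ℂ (Cc Y) with hb
  set e : (Cc X ⊗[ℂ] Cc Y) ≃ₗ[ℂ] (_ →₀ Cc X) :=
    (TensorProduct.congr (LinearEquiv.refl ℂ (Cc X)) b.repr).trans
      (TensorProduct.finsuppScalarRight ℂ ℂ (Cc X) _) with he
  have claim : ∀ (s : Cc X ⊗[ℂ] Cc Y) (x : X) i,
      ((e s i : Cc X) : X → ℂ) x = b.repr (phiMap X Y x s) i := by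
    intro s x i
    induction s using TensorProduct.induction_on with
    | zero => simp
    | tmul f g =>
      simp [he, TensorProduct.congr_tmul, TensorProduct.finsuppScalarRight_apply_tmul_apply,
        phiMap, mul_comm]
    | add a c ha hc => simp [map_add, ha, hc]
  have hphi : ∀ x : X, phiMap X Y x t = 0 := by
    intro x
    apply Subtype.ext
    funext y
    have := phi_apply x t y
    rw [ht] at this
    simpa using this
  have he0 : e t = 0 := by
    refine Finsupp.ext fun i => ?_
    refine Subtype.ext (funext fun x => ?_)
    have := claim t x i
    rw [hphi x] at this
    simpa using this
  have htz : t = e.symm (e t) := (e.symm_apply_apply t).symm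
  rw [he0, map_zero] at htz
  exact htz

/-- The canonical map `γ : C_c^∞(X) ⊗ C_c^∞(Y) → C_c^∞(X × Y)`, `γ(f ⊗ g)(x,y) = f(x)g(y)`,
is a linear isomorphism: `γ` is injective and its range is exactly `C_c^∞(X × Y)`. -/
theorem stmt_4 (X Y : Type)
    [TopologicalSpace X] [T2Space X] [LocallyCompactSpace X] [TotallyDisconnectedSpace X]
    [TopologicalSpace Y] [T2Space Y] [LocallyCompactSpace Y] [TotallyDisconnectedSpace Y] :
    Function.Injective (gammaMap X Y) ∧ LinearMap.range (gammaMap X Y) = Cc (X × Y) := by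
  refine ⟨gammaMap_injective X Y, le_antisymm ?_ ?_⟩
  · rintro f ⟨t, rfl⟩
    exact gamma_mem_Cc t
  · intro f hf
    exact mem_range_of_mem_Cc hf
end

section
/- Every compact open subset W of a product X × Y of two totally disconnected locally compact Hausdorff spaces can be written as a finite disjoint union of rectangles U × V, where U ⊆ X and V ⊆ Y are compact open subsets. -/
open Set

lemma aux_clopen_compact {Z : Type} [TopologicalSpace Z] [T2Space Z] [LocallyCompactSpace Z]
    [TotallyDisconnectedSpace Z] {U : Set Z} (hU : IsOpen U) {x : Z} (hx : x ∈ U) :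
    ∃ V : Set Z, IsCompact V ∧ IsClopen V ∧ x ∈ V ∧ V ⊆ U := by
  obtain ⟨K, hKc, hxK, hKU⟩ := exists_compact_subset hU hx
  obtain ⟨V, hVclopen, hxV, hVK⟩ :=
    loc_compact_Haus_tot_disc_of_zero_dim.mem_nhds_iff.1 (isOpen_interior.mem_nhds hxK)
  exact ⟨V, hKc.of_isClosed_subset hVclopen.1 (hVK.trans interior_subset), hVclopen, hxV,
    (hVK.trans interior_subset).trans hKU⟩

/-- Every compact open subset of a product of two totally disconnected locally compact
Hausdorff spaces is a finite disjoint union of compact open rectangles. -/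
theorem stmt_5 (X Y : Type)
    [TopologicalSpace X] [T2Space X] [LocallyCompactSpace X] [TotallyDisconnectedSpace X]
    [TopologicalSpace Y] [T2Space Y] [LocallyCompactSpace Y] [TotallyDisconnectedSpace Y]
    (W : Set (X × Y)) (hWc : IsCompact W) (hWo : IsOpen W) :
    ∃ (n : ℕ) (U : Fin n → Set X) (V : Fin n → Set Y),
      (∀ i, IsCompact (U i) ∧ IsOpen (U i) ∧ IsCompact (V i) ∧ IsOpen (V i)) ∧
      Pairwise (fun i j => Disjoint (U i ×ˢ V i) (U j ×ˢ V j)) ∧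
      W = ⋃ i, U i ×ˢ V i := by
  classical
  -- Step 1: around each point of W find a compact clopen rectangle inside W.
  have key : ∀ w ∈ W, ∃ (A : Set X) (B : Set Y),
      IsCompact A ∧ IsClopen A ∧ IsCompact B ∧ IsClopen B ∧ w ∈ A ×ˢ B ∧ A ×ˢ B ⊆ W := by
    intro w hw
    obtain ⟨U0, V0, hU0, hV0, ha, hb, hsub⟩ := isOpen_prod_iff.1 hWo w.1 w.2 hw
    obtain ⟨A, hAc, hAcl, haA, hAU⟩ := aux_clopen_compact hU0 ha
    obtain ⟨B, hBc, hBcl, hbB, hBV⟩ := aux_clopen_compact hV0 hb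
    exact ⟨A, B, hAc, hAcl, hBc, hBcl, ⟨haA, hbB⟩,
      (Set.prod_mono hAU hBV).trans hsub⟩
  choose! A B hAc hAcl hBc hBcl hmem hsub using key
  -- Step 2: finite subcover.
  obtain ⟨t, htW, hcov⟩ := hWc.elim_nhds_subcover (fun w => A w ×ˢ B w) (fun w hw =>
    (((hAcl w hw).2.prod (hBcl w hw).2)).mem_nhds (hmem w hw))
  -- Step 3: atoms indexed by pairs of subsets of t.
  set ι := Finset {w // w ∈ t} × Finset {w // w ∈ t} with hι
  have htW' : ∀ w : {x // x ∈ t}, (w : X × Y) ∈ W := fun w => htW w w.2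
  set UA : Finset {w // w ∈ t} → Set X :=
    fun S => ⋂ k : {w // w ∈ t}, if k ∈ S then A k else (A (k : X × Y))ᶜ with hUA
  set VB : Finset {w // w ∈ t} → Set Y :=
    fun T => ⋂ k : {w // w ∈ t}, if k ∈ T then B k else (B (k : X × Y))ᶜ with hVB
  set cond : ι → Prop := fun p => (p.1 ∩ p.2).Nonempty with hcond
  set U' : ι → Set X := fun p => if cond p then UA p.1 else ∅ with hU'
  set V' : ι → Set Y := fun p => if cond p then VB p.2 else ∅ with hV'
  have hUAclopen : ∀ S, IsClopen (UA S) := by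
    intro S
    apply isClopen_iInter_of_finite
    intro k
    split
    · exact hAcl k (htW' k)
    · exact (hAcl k (htW' k)).compl
  have hVBclopen : ∀ T, IsClopen (VB T) := by
    intro T
    apply isClopen_iInter_of_finite
    intro k
    split
    · exact hBcl k (htW' k)
    · exact (hBcl k (htW' k)).compl
  have hUAsub : ∀ (S) (k : {w // w ∈ t}), k ∈ S → UA S ⊆ A (k : X × Y) := by
    intro S k hk x hx
    have := Set.mem_iInter.1 hx k
    simpa [hk] using this
  have hVBsub : ∀ (T) (k : {w // w ∈ t}), k ∈ T → VB T ⊆ B (k : X × Y) := by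
    intro T k hk x hx
    have := Set.mem_iInter.1 hx k
    simpa [hk] using this
  have hUAsub' : ∀ (S) (k : {w // w ∈ t}), k ∉ S → UA S ⊆ (A (k : X × Y))ᶜ := by
    intro S k hk x hx
    have := Set.mem_iInter.1 hx k
    simpa [hk] using this
  have hVBsub' : ∀ (T) (k : {w // w ∈ t}), k ∉ T → VB T ⊆ (B (k : X × Y))ᶜ := by
    intro T k hk x hx
    have := Set.mem_iInter.1 hx k
    simpa [hk] using this
  have hprops : ∀ p : ι, IsCompact (U' p) ∧ IsOpen (U' p) ∧ IsCompact (V' p) ∧ IsOpen (V' p) := by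
    intro p
    simp only [hU', hV']
    split
    · next hc =>
      obtain ⟨k, hk⟩ := hc
      refine ⟨(hAc k (htW' k)).of_isClosed_subset (hUAclopen p.1).1
          (hUAsub p.1 k (Finset.mem_inter.1 hk).1),
        (hUAclopen p.1).2,
        (hBc k (htW' k)).of_isClosed_subset (hVBclopen p.2).1
          (hVBsub p.2 k (Finset.mem_inter.1 hk).2),
        (hVBclopen p.2).2⟩
    · exact ⟨isCompact_empty, isOpen_empty, isCompact_empty, isOpen_empty⟩
  have hdisj : Pairwise fun p q : ι => Disjoint (U' p ×ˢ V' p) (U' q ×ˢ V' q) := by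
    intro p q hpq
    by_cases hp : cond p
    · by_cases hq : cond q
      · have : p.1 ≠ q.1 ∨ p.2 ≠ q.2 := by
          by_contra h
          push_neg at h
          exact hpq (Prod.ext h.1 h.2)
        rcases this with h | h
        · obtain ⟨k, hk⟩ : ∃ k, (k ∈ p.1 ∧ k ∉ q.1) ∨ (k ∈ q.1 ∧ k ∉ p.1) := by
            by_contra hcon
            push_neg at hcon
            exact h (Finset.ext fun k => by
              have := hcon k; tauto)
          rw [Set.disjoint_left]
          rintro ⟨a, b⟩ ⟨ha, _⟩ ⟨ha', _⟩
          simp only [hU', if_pos hp] at ha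
          simp only [hU', if_pos hq] at ha'
          rcases hk with ⟨h1, h2⟩ | ⟨h1, h2⟩
          · exact hUAsub' q.1 k h2 ha' (hUAsub p.1 k h1 ha)
          · exact hUAsub' p.1 k h2 ha (hUAsub q.1 k h1 ha')
        · obtain ⟨k, hk⟩ : ∃ k, (k ∈ p.2 ∧ k ∉ q.2) ∨ (k ∈ q.2 ∧ k ∉ p.2) := by
            by_contra hcon
            push_neg at hcon
            exact h (Finset.ext fun k => by
              have := hcon k; tauto)
          rw [Set.disjoint_left]
          rintro ⟨a, b⟩ ⟨_, hb⟩ ⟨_, hb'⟩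
          simp only [hV', if_pos hp] at hb
          simp only [hV', if_pos hq] at hb'
          rcases hk with ⟨h1, h2⟩ | ⟨h1, h2⟩
          · exact hVBsub' q.2 k h2 hb' (hVBsub p.2 k h1 hb)
          · exact hVBsub' p.2 k h2 hb (hVBsub q.2 k h1 hb')
      · simp [hV', hq]
    · simp [hV', hp]
  have hcover : W = ⋃ p : ι, U' p ×ˢ V' p := by
    apply Set.Subset.antisymm
    · rintro ⟨a, b⟩ hab
      have := hcov hab
      simp only [Set.mem_iUnion] at this
      obtain ⟨w, hwt, hwm⟩ := this
      set S : Finset {w // w ∈ t} := Finset.univ.filter (fun k => a ∈ A k) with hS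
      set T : Finset {w // w ∈ t} := Finset.univ.filter (fun k => b ∈ B k) with hT
      have hcp : cond (S, T) := by
        refine ⟨⟨w, hwt⟩, ?_⟩
        simp [hS, hT, hwm.1, hwm.2]
      refine Set.mem_iUnion.2 ⟨(S, T), ?_⟩
      constructor
      · simp only [hU', if_pos hcp]
        refine Set.mem_iInter.2 fun k => ?_
        by_cases hkS : k ∈ S
        · rw [if_pos hkS]
          exact (Finset.mem_filter.1 hkS).2
        · rw [if_neg hkS]
          exact fun hc => hkS (Finset.mem_filter.2 ⟨Finset.mem_univ k, hc⟩)
      · simp only [hV', if_pos hcp]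
        refine Set.mem_iInter.2 fun k => ?_
        by_cases hkT : k ∈ T
        · rw [if_pos hkT]
          exact (Finset.mem_filter.1 hkT).2
        · rw [if_neg hkT]
          exact fun hc => hkT (Finset.mem_filter.2 ⟨Finset.mem_univ k, hc⟩)
    · refine Set.iUnion_subset fun p => ?_
      by_cases hp : cond p
      · rintro ⟨a, b⟩ ⟨ha, hb⟩
        simp only [hU', if_pos hp] at ha
        simp only [hV', if_pos hp] at hb
        obtain ⟨k, hk⟩ := hp
        exact hsub k (htW' k)
          ⟨hUAsub p.1 k (Finset.mem_inter.1 hk).1 ha,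
           hVBsub p.2 k (Finset.mem_inter.1 hk).2 hb⟩
      · simp [hU', hp]
  -- Step 4: reindex by Fin n.
  let e := Fintype.equivFin ι
  refine ⟨Fintype.card ι, U' ∘ e.symm, V' ∘ e.symm, fun i => hprops (e.symm i), ?_, ?_⟩
  · intro i j hij
    exact hdisj (e.symm.injective.ne hij)
  · rw [hcover]
    exact (e.symm.iSup_comp (g := fun p => U' p ×ˢ V' p)).symm
end

section
/- Let X, Y, Z be totally disconnected locally compact Hausdorff spaces and p : X → Z, q : Y → Z continuous maps. Then the canonical map from the balanced tensor product C_c^∞(X) ⊗_{C_c^∞(Z)} C_c^∞(Y) (with module structures induced by p* and q*) to C_c^∞(X ×_{p,q} Y) is an isomorphism, where X ×_{p,q} Y = {(x,y) : p(x) = q(y)} is the fibre product with the subspace topology. -/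
open TensorProduct

variable (X Y Z : Type) [TopologicalSpace X] [TopologicalSpace Y] [TopologicalSpace Z]
  (p : X → Z) (q : Y → Z)

/-- The `C_c^∞(Z)`-module structure on `C_c^∞(X)` induced by `p : X → Z`:
`f · p*(h) = f · (h ∘ p)`. -/
noncomputable def pmul (hp : Continuous p) (f : Cc X) (h : Cc Z) : Cc X :=
  ⟨(f : X → ℂ) * fun x => (h : Z → ℂ) (p x),
    ⟨f.2.1.mul (h.2.1.comp_continuous hp), f.2.2.mul_right⟩⟩

/-- The `C_c^∞(Z)`-module structure on `C_c^∞(Y)` induced by `q : Y → Z`: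
`q*(h) · g = (h ∘ q) · g`. -/
noncomputable def qmul (hq : Continuous q) (h : Cc Z) (g : Cc Y) : Cc Y :=
  ⟨(fun y => (h : Z → ℂ) (q y)) * (g : Y → ℂ),
    ⟨(h.2.1.comp_continuous hq).mul g.2.1, g.2.2.mul_left⟩⟩

/-- The balancing relations defining `C_c^∞(X) ⊗_{C_c^∞(Z)} C_c^∞(Y)`. -/
noncomputable def balRel (hp : Continuous p) (hq : Continuous q) :
    Submodule ℂ (Cc X ⊗[ℂ] Cc Y) :=
  Submodule.span ℂ {t | ∃ (f : Cc X) (g : Cc Y) (h : Cc Z),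
    t = (pmul X Z p hp f h) ⊗ₜ[ℂ] g - f ⊗ₜ[ℂ] (qmul Y Z q hq h g)}

/-- The canonical linear map `C_c^∞(X) ⊗ C_c^∞(Y) → (X ×_{p,q} Y → ℂ)` into functions on
the fibre product, `(f ⊗ g) ↦ ((x,y) ↦ f(x)g(y))`. -/
noncomputable def fibMap : (Cc X ⊗[ℂ] Cc Y) →ₗ[ℂ] ({w : X × Y // p w.1 = q w.2} → ℂ) :=
  TensorProduct.lift <|
    LinearMap.mk₂ ℂ (fun f g => fun w => (f : X → ℂ) w.1.1 * (g : Y → ℂ) w.1.2)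
      (by intros f₁ f₂ g; funext w; simp [add_mul])
      (by intros c f g; funext w; simp [smul_eq_mul]; ring)
      (by intros f g₁ g₂; funext w; simp [mul_add])
      (by intros c f g; funext w; simp [smul_eq_mul]; ring)


open Set Function

noncomputable def ind {X : Type*} (K : Set X) : X → ℂ := K.indicator 1

lemma ind_of_mem {X : Type*} {K : Set X} {x : X} (h : x ∈ K) : ind K x = 1 :=
  Set.indicator_of_mem h 1

lemma ind_of_not_mem {X : Type*} {K : Set X} {x : X} (h : x ∉ K) : ind K x = 0 :=
  Set.indicator_of_notMem h 1

lemma ind_isLocallyConstant {X : Type*} [TopologicalSpace X] {K : Set X}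
    (hK : IsClopen K) : IsLocallyConstant (ind K) := by
  rw [IsLocallyConstant.iff_exists_open]
  intro x
  by_cases hx : x ∈ K
  · exact ⟨K, hK.2, hx, fun y hy => by rw [ind_of_mem hy, ind_of_mem hx]⟩
  · exact ⟨Kᶜ, hK.1.isOpen_compl, hx,
      fun y hy => by rw [ind_of_not_mem hy, ind_of_not_mem hx]⟩

lemma ind_mem_Cc {X : Type} [TopologicalSpace X] [T2Space X] {K : Set X}
    (hKc : IsCompact K) (hKo : IsOpen K) : ind K ∈ Cc X := by
  refine ⟨ind_isLocallyConstant ⟨hKc.isClosed, hKo⟩, ?_⟩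
  have h1 : Function.support (ind K) ⊆ K := by
    intro x hx
    by_contra h
    exact hx (ind_of_not_mem h)
  exact hKc.of_isClosed_subset isClosed_closure (closure_minimal h1 hKc.isClosed)

section TD
variable {H : Type*} [TopologicalSpace H] [T2Space H] [LocallyCompactSpace H]
  [TotallyDisconnectedSpace H]

lemma exists_compactOpen_nhd {x : H} {U : Set H} (hU : IsOpen U) (hx : x ∈ U) :
    ∃ V : Set H, IsCompact V ∧ IsOpen V ∧ x ∈ V ∧ V ⊆ U := by
  obtain ⟨s, comp, xs, sU⟩ := exists_compact_subset hU hx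
  obtain ⟨V, hV, hxV, hVs⟩ :=
    loc_compact_Haus_tot_disc_of_zero_dim.exists_subset_of_mem_open xs isOpen_interior
  exact ⟨V, comp.of_isClosed_subset hV.1 (hVs.trans interior_subset), hV.2, hxV,
    (hVs.trans interior_subset).trans sU⟩

lemma exists_compactOpen_between {K U : Set H} (hK : IsCompact K) (hU : IsOpen U)
    (hKU : K ⊆ U) : ∃ V : Set H, IsCompact V ∧ IsOpen V ∧ K ⊆ V ∧ V ⊆ U := by
  choose V hVc hVo hxV hVU using fun (x : H) (hx : x ∈ K) =>
    exists_compactOpen_nhd hU (hKU hx)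
  obtain ⟨t, ht⟩ := hK.elim_nhds_subcover' (fun x hx => V x hx)
    (fun x hx => (hVo x hx).mem_nhds (hxV x hx))
  refine ⟨⋃ x ∈ t, V x.1 x.2, ?_, ?_, ht, ?_⟩
  · exact t.isCompact_biUnion (fun x _ => hVc x.1 x.2)
  · exact isOpen_biUnion (fun x _ => hVo x.1 x.2)
  · exact Set.iUnion₂_subset fun x _ => hVU x.1 x.2

end TD

lemma finite_image_of_compact_closure {X E : Type*} [TopologicalSpace X] {F : X → E}
    (hF : IsLocallyConstant F) {S : Set X} (hc : IsCompact S) : (F '' S).Finite := by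
  haveI : CompactSpace S := isCompact_iff_compactSpace.1 hc
  have : IsLocallyConstant (F ∘ (Subtype.val : S → X)) :=
    hF.comp_continuous continuous_subtype_val
  rw [Set.image_eq_range]
  exact this.range_finite

lemma ind_union {T : Type*} (A B : Set T) :
    ind (A ∪ B) = ind A + ind B - ind (A ∩ B) := by
  funext x
  simp only [Pi.sub_apply, Pi.add_apply]
  by_cases hA : x ∈ A <;> by_cases hB : x ∈ B
  · rw [ind_of_mem (Set.mem_union_left _ hA), ind_of_mem hA, ind_of_mem hB,
      ind_of_mem (Set.mem_inter hA hB)]; ring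
  · rw [ind_of_mem (Set.mem_union_left _ hA), ind_of_mem hA, ind_of_not_mem hB,
      ind_of_not_mem (fun h => hB h.2)]; ring
  · rw [ind_of_mem (Set.mem_union_right _ hB), ind_of_not_mem hA, ind_of_mem hB,
      ind_of_not_mem (fun h => hA h.1)]; ring
  · rw [ind_of_not_mem (fun h => h.elim hA hB), ind_of_not_mem hA, ind_of_not_mem hB,
      ind_of_not_mem (fun h => hA h.1)]; ring

lemma fibMap_tmul (f : Cc X) (g : Cc Y) :
    fibMap X Y Z p q (f ⊗ₜ[ℂ] g) =
      fun w : {w : X × Y // p w.1 = q w.2} => (f : X → ℂ) w.1.1 * (g : Y → ℂ) w.1.2 := rfl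

lemma fibMap_tmul_mem_Cc [T2Space Z] (hp : Continuous p) (hq : Continuous q)
    (f : Cc X) (g : Cc Y) :
    fibMap X Y Z p q (f ⊗ₜ[ℂ] g) ∈ Cc {w : X × Y // p w.1 = q w.2} := by
  constructor
  · exact (f.2.1.comp_continuous (continuous_fst.comp continuous_subtype_val)).mul
      (g.2.1.comp_continuous (continuous_snd.comp continuous_subtype_val))
  · have hemb : Topology.IsClosedEmbedding (Subtype.val : {w : X × Y // p w.1 = q w.2} → X × Y) :=
      Topology.IsClosedEmbedding.subtypeVal
        (isClosed_eq (hp.comp continuous_fst) (hq.comp continuous_snd))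
    have hT : IsCompact (Subtype.val ⁻¹' (tsupport (f : X → ℂ) ×ˢ tsupport (g : Y → ℂ)) :
        Set {w : X × Y // p w.1 = q w.2}) :=
      hemb.isCompact_preimage (f.2.2.prod g.2.2)
    refine hT.of_isClosed_subset isClosed_closure (closure_minimal ?_
      (((isClosed_tsupport _).prod (isClosed_tsupport _)).preimage continuous_subtype_val))
    intro w hw
    rw [Function.mem_support, fibMap_tmul] at hw
    exact ⟨subset_tsupport _ (left_ne_zero_of_mul hw),
      subset_tsupport _ (right_ne_zero_of_mul hw)⟩

lemma ind_biUnion_rect_mem_range {ι : Type*} [T2Space X] [T2Space Y] (s : Finset ι) :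
    ∀ (U : ι → Set X) (V : ι → Set Y),
    (∀ i ∈ s, IsCompact (U i) ∧ IsOpen (U i)) →
    (∀ i ∈ s, IsCompact (V i) ∧ IsOpen (V i)) →
    ind (⋃ i ∈ s, (Subtype.val ⁻¹' (U i ×ˢ V i) : Set {w : X × Y // p w.1 = q w.2}))
      ∈ LinearMap.range (fibMap X Y Z p q) := by
  classical
  induction s using Finset.induction_on with
  | empty =>
    intro U V _ _
    have : (⋃ i ∈ (∅ : Finset ι), (Subtype.val ⁻¹' (U i ×ˢ V i) :
        Set {w : X × Y // p w.1 = q w.2})) = ∅ := by simp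
    rw [this, show ind (∅ : Set {w : X × Y // p w.1 = q w.2}) = 0 from
      Set.indicator_empty 1]
    exact zero_mem _
  | insert a s ha ih =>
    intro U V hU hV
    rw [Finset.set_biUnion_insert, ind_union]
    have e2 : (Subtype.val ⁻¹' (U a ×ˢ V a) : Set {w : X × Y // p w.1 = q w.2}) ∩
        (⋃ i ∈ s, Subtype.val ⁻¹' (U i ×ˢ V i)) =
        ⋃ i ∈ s, Subtype.val ⁻¹' ((U a ∩ U i) ×ˢ (V a ∩ V i)) := by
      rw [Set.inter_iUnion₂]
      exact Set.iUnion₂_congr fun i hi => by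
        rw [← Set.preimage_inter, Set.prod_inter_prod]
    have e3 : ind (Subtype.val ⁻¹' (U a ×ˢ V a) : Set {w : X × Y // p w.1 = q w.2}) =
        fibMap X Y Z p q ((⟨ind (U a), ind_mem_Cc (hU a (s.mem_insert_self a)).1
            (hU a (s.mem_insert_self a)).2⟩ : Cc X) ⊗ₜ[ℂ]
          (⟨ind (V a), ind_mem_Cc (hV a (s.mem_insert_self a)).1
            (hV a (s.mem_insert_self a)).2⟩ : Cc Y)) := by
      funext w
      rw [fibMap_tmul]
      show ind (Subtype.val ⁻¹' (U a ×ˢ V a)) w = ind (U a) w.1.1 * ind (V a) w.1.2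
      by_cases h1 : w.1.1 ∈ U a <;> by_cases h2 : w.1.2 ∈ V a
      · rw [ind_of_mem (show w ∈ Subtype.val ⁻¹' (U a ×ˢ V a) from ⟨h1, h2⟩),
          ind_of_mem h1, ind_of_mem h2]; ring
      · rw [ind_of_not_mem (show w ∉ Subtype.val ⁻¹' (U a ×ˢ V a) from fun h => h2 h.2),
          ind_of_not_mem h2]; ring
      · rw [ind_of_not_mem (show w ∉ Subtype.val ⁻¹' (U a ×ˢ V a) from fun h => h1 h.1),
          ind_of_not_mem h1]; ring
      · rw [ind_of_not_mem (show w ∉ Subtype.val ⁻¹' (U a ×ˢ V a) from fun h => h1 h.1),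
          ind_of_not_mem h1]; ring
    rw [e2, e3]
    refine sub_mem (add_mem ⟨_, rfl⟩ ?_) ?_
    · exact ih U V (fun i hi => hU i (Finset.mem_insert_of_mem hi))
        (fun i hi => hV i (Finset.mem_insert_of_mem hi))
    · refine ih (fun i => U a ∩ U i) (fun i => V a ∩ V i) (fun i hi => ?_) (fun i hi => ?_)
      · exact ⟨(hU a (s.mem_insert_self a)).1.inter_right
          (hU i (Finset.mem_insert_of_mem hi)).1.isClosed,
          (hU a (s.mem_insert_self a)).2.inter (hU i (Finset.mem_insert_of_mem hi)).2⟩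
      · exact ⟨(hV a (s.mem_insert_self a)).1.inter_right
          (hV i (Finset.mem_insert_of_mem hi)).1.isClosed,
          (hV a (s.mem_insert_self a)).2.inter (hV i (Finset.mem_insert_of_mem hi)).2⟩

lemma ind_compactOpen_mem_range
    [T2Space X] [LocallyCompactSpace X] [TotallyDisconnectedSpace X]
    [T2Space Y] [LocallyCompactSpace Y] [TotallyDisconnectedSpace Y]
    {K : Set {w : X × Y // p w.1 = q w.2}} (hKc : IsCompact K) (hKo : IsOpen K) :
    ind K ∈ LinearMap.range (fibMap X Y Z p q) := by
  have h : ∀ w : {w : X × Y // p w.1 = q w.2}, w ∈ K → ∃ (U : Set X) (V : Set Y),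
      IsCompact U ∧ IsOpen U ∧ IsCompact V ∧ IsOpen V ∧ w.1.1 ∈ U ∧ w.1.2 ∈ V ∧
      Subtype.val ⁻¹' (U ×ˢ V) ⊆ K := by
    intro w hw
    obtain ⟨O, hO, hOK⟩ := isOpen_induced_iff.1 hKo
    have hwO : w.1 ∈ O := by rw [← hOK] at hw; exact hw
    obtain ⟨U0, V0, hU0, hV0, hx, hy, hsub⟩ := isOpen_prod_iff.1 hO w.1.1 w.1.2 hwO
    obtain ⟨U, hUc, hUo, hxU, hUU⟩ := exists_compactOpen_nhd hU0 hx
    obtain ⟨V, hVc, hVo, hyV, hVV⟩ := exists_compactOpen_nhd hV0 hy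
    exact ⟨U, V, hUc, hUo, hVc, hVo, hxU, hyV, by
      intro u hu
      rw [← hOK]
      exact hsub ⟨hUU hu.1, hVV hu.2⟩⟩
  choose U V hUc hUo hVc hVo hxU hyV hsub using h
  obtain ⟨t, ht⟩ := hKc.elim_nhds_subcover' (fun w hw => Subtype.val ⁻¹' (U w hw ×ˢ V w hw))
    (fun w hw => (((hUo w hw).prod (hVo w hw)).preimage continuous_subtype_val).mem_nhds
      ⟨hxU w hw, hyV w hw⟩)
  have hK : K = ⋃ w ∈ t, Subtype.val ⁻¹' (U w.1 w.2 ×ˢ V w.1 w.2) :=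
    subset_antisymm ht (Set.iUnion₂_subset fun w _ => hsub w.1 w.2)
  rw [hK]
  exact ind_biUnion_rect_mem_range X Y Z p q t (fun w => U w.1 w.2) (fun w => V w.1 w.2)
    (fun w _ => ⟨hUc w.1 w.2, hUo w.1 w.2⟩) (fun w _ => ⟨hVc w.1 w.2, hVo w.1 w.2⟩)

set_option synthInstance.maxHeartbeats 400000
set_option maxHeartbeats 1000000

noncomputable def indCc {T : Type} [TopologicalSpace T] [T2Space T] {K : Set T}
    (h : IsCompact K ∧ IsOpen K) : Cc T := ⟨ind K, ind_mem_Cc h.1 h.2⟩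

lemma tmul_ind_mem_balRel [T2Space Z] [LocallyCompactSpace Z] [TotallyDisconnectedSpace Z]
    [T2Space X] [T2Space Y] (hp : Continuous p) (hq : Continuous q)
    {A : Set X} {B : Set Y} (hA : IsCompact A ∧ IsOpen A) (hB : IsCompact B ∧ IsOpen B)
    (hAB : ∀ x ∈ A, ∀ y ∈ B, p x ≠ q y) :
    (indCc hA) ⊗ₜ[ℂ] (indCc hB) ∈ balRel X Y Z p q hp hq := by
  have hpA : IsCompact (p '' A) := hA.1.image hp
  have hqB : IsCompact (q '' B) := hB.1.image hq
  have hsub : p '' A ⊆ (q '' B)ᶜ := by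
    rintro z ⟨x, hx, rfl⟩ ⟨y, hy, hz⟩
    exact hAB x hx y hy hz.symm
  obtain ⟨C, hCc, hCo, hC1, hC2⟩ :=
    exists_compactOpen_between hpA hqB.isClosed.isOpen_compl hsub
  have h1 : pmul X Z p hp (indCc hA) (indCc ⟨hCc, hCo⟩) = indCc hA := by
    apply Subtype.ext; funext x
    show ind A x * ind C (p x) = ind A x
    by_cases hx : x ∈ A
    · rw [ind_of_mem (hC1 ⟨x, hx, rfl⟩)]; ring
    · rw [ind_of_not_mem hx]; ring
  have h2 : qmul Y Z q hq (indCc ⟨hCc, hCo⟩) (indCc hB) = 0 := by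
    apply Subtype.ext; funext y
    show ind C (q y) * ind B y = 0
    by_cases hy : y ∈ B
    · rw [ind_of_not_mem (fun hC => hC2 hC ⟨y, hy, rfl⟩)]; ring
    · rw [ind_of_not_mem hy]; ring
  exact Submodule.subset_span ⟨indCc hA, indCc hB, indCc ⟨hCc, hCo⟩,
    by rw [h1, h2, TensorProduct.tmul_zero]; exact (sub_zero ((indCc hA) ⊗ₜ[ℂ] (indCc hB))).symm⟩

/-- The canonical map from the balanced tensor product
`C_c^∞(X) ⊗_{C_c^∞(Z)} C_c^∞(Y)` to `C_c^∞(X ×_{p,q} Y)` is an isomorphism: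
the kernel of the lift on `C_c^∞(X) ⊗ C_c^∞(Y)` is exactly the balancing relation
submodule, and its range is exactly `C_c^∞` of the fibre product. -/
theorem stmt_7
    [T2Space X] [LocallyCompactSpace X] [TotallyDisconnectedSpace X]
    [T2Space Y] [LocallyCompactSpace Y] [TotallyDisconnectedSpace Y]
    [T2Space Z] [LocallyCompactSpace Z] [TotallyDisconnectedSpace Z]
    (hp : Continuous p) (hq : Continuous q) :
    LinearMap.ker (fibMap X Y Z p q) = balRel X Y Z p q hp hq ∧
    LinearMap.range (fibMap X Y Z p q) = Cc {w : X × Y // p w.1 = q w.2} := by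
  
  classical
  constructor
  · apply le_antisymm
    · intro t ht
      obtain ⟨S, rfl⟩ := TensorProduct.exists_finset t
      set F : X → (↥S → ℂ) := fun x i => (((i : Cc X × Cc Y).1 : Cc X) : X → ℂ) x with hF
      set G : Y → (↥S → ℂ) := fun y i => (((i : Cc X × Cc Y).2 : Cc Y) : Y → ℂ) y with hG
      have hFlc : IsLocallyConstant F := by
        rw [IsLocallyConstant.iff_exists_open]
        intro x
        choose U hUo hxU hUc using fun i : ↥S => ((i : Cc X × Cc Y).1).2.1.exists_open x
        exact ⟨⋂ i, U i, isOpen_iInter_of_finite hUo, Set.mem_iInter.2 hxU,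
          fun y hy => funext fun i => hUc i y (Set.mem_iInter.1 hy i)⟩
      have hGlc : IsLocallyConstant G := by
        rw [IsLocallyConstant.iff_exists_open]
        intro y
        choose U hUo hxU hUc using fun i : ↥S => ((i : Cc X × Cc Y).2).2.1.exists_open y
        exact ⟨⋂ i, U i, isOpen_iInter_of_finite hUo, Set.mem_iInter.2 hxU,
          fun z hz => funext fun i => hUc i z (Set.mem_iInter.1 hz i)⟩
      have hFsupp : IsCompact (closure {x | F x ≠ 0}) := by
        have hsub : {x | F x ≠ 0} ⊆ ⋃ i : ↥S, tsupport (((i : Cc X × Cc Y).1 : Cc X) : X → ℂ) := by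
          intro x hx
          rw [Set.mem_setOf_eq, Function.ne_iff] at hx
          obtain ⟨i, hi⟩ := hx
          exact Set.mem_iUnion.2 ⟨i, subset_tsupport _ hi⟩
        exact (isCompact_iUnion fun i : ↥S => ((i : Cc X × Cc Y).1).2.2).of_isClosed_subset isClosed_closure
          (closure_minimal hsub (isClosed_iUnion_of_finite fun i => isClosed_tsupport _))
      have hGsupp : IsCompact (closure {y | G y ≠ 0}) := by
        have hsub : {y | G y ≠ 0} ⊆ ⋃ i : ↥S, tsupport (((i : Cc X × Cc Y).2 : Cc Y) : Y → ℂ) := by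
          intro y hy
          rw [Set.mem_setOf_eq, Function.ne_iff] at hy
          obtain ⟨i, hi⟩ := hy
          exact Set.mem_iUnion.2 ⟨i, subset_tsupport _ hi⟩
        exact (isCompact_iUnion fun i : ↥S => ((i : Cc X × Cc Y).2).2.2).of_isClosed_subset isClosed_closure
          (closure_minimal hsub (isClosed_iUnion_of_finite fun i => isClosed_tsupport _))
      have hFfin : (F '' closure {x | F x ≠ 0}).Finite :=
        finite_image_of_compact_closure hFlc hFsupp
      have hGfin : (G '' closure {y | G y ≠ 0}).Finite :=
        finite_image_of_compact_closure hGlc hGsupp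
      set VF : Finset (↥S → ℂ) := hFfin.toFinset.erase 0 with hVF
      set VG : Finset (↥S → ℂ) := hGfin.toFinset.erase 0 with hVG
      set A : (↥S → ℂ) → Set X := fun v => F ⁻¹' {v} with hA
      set B : (↥S → ℂ) → Set Y := fun v => G ⁻¹' {v} with hB
      have hAco : ∀ v ∈ VF, IsCompact (A v) ∧ IsOpen (A v) := by
        intro v hv
        have hvne : v ≠ 0 := (Finset.mem_erase.1 hv).1
        have hsubA : A v ⊆ closure {x | F x ≠ 0} := fun x hx =>
          subset_closure (by rw [Set.mem_setOf_eq, show F x = v from hx]; exact hvne)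
        exact ⟨hFsupp.of_isClosed_subset (hFlc.isClosed_fiber v) hsubA, hFlc.isOpen_fiber v⟩
      have hBco : ∀ v ∈ VG, IsCompact (B v) ∧ IsOpen (B v) := by
        intro v hv
        have hvne : v ≠ 0 := (Finset.mem_erase.1 hv).1
        have hsubB : B v ⊆ closure {y | G y ≠ 0} := fun y hy =>
          subset_closure (by rw [Set.mem_setOf_eq, show G y = v from hy]; exact hvne)
        exact ⟨hGsupp.of_isClosed_subset (hGlc.isClosed_fiber v) hsubB, hGlc.isOpen_fiber v⟩
      have hvalF : ∀ x, F x ≠ 0 → F x ∈ VF := fun x hx =>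
        Finset.mem_erase.2 ⟨hx, hFfin.mem_toFinset.2 ⟨x, subset_closure hx, rfl⟩⟩
      have hvalG : ∀ y, G y ≠ 0 → G y ∈ VG := fun y hy =>
        Finset.mem_erase.2 ⟨hy, hGfin.mem_toFinset.2 ⟨y, subset_closure hy, rfl⟩⟩
      have hf_eq : ∀ i : ↥S, ((i : Cc X × Cc Y).1 : Cc X) =
          ∑ v ∈ VF.attach, (v.1 i) • indCc (hAco v.1 v.2) := by
        intro i
        apply Subtype.ext
        funext x
        rw [AddSubmonoidClass.coe_finset_sum, Finset.sum_apply]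
        show F x i = _
        by_cases hx : F x = 0
        · rw [hx]
          show (0 : ℂ) = _
          symm
          apply Finset.sum_eq_zero
          intro v _
          have hmem : x ∉ A v.1 := fun hm =>
            (Finset.mem_erase.1 v.2).1 (by rw [← show F x = v.1 from hm, hx])
          rw [SetLike.val_smul, Pi.smul_apply,
            show ((indCc (hAco v.1 v.2) : Cc X) : X → ℂ) = ind (A v.1) from rfl,
            ind_of_not_mem hmem, smul_zero]
        · rw [Finset.sum_eq_single (⟨F x, hvalF x hx⟩ : {v // v ∈ VF})]
          · rw [SetLike.val_smul, Pi.smul_apply,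
              show ((indCc (hAco (F x) (hvalF x hx)) : Cc X) : X → ℂ) = ind (A (F x)) from rfl,
              ind_of_mem (show x ∈ A (F x) from rfl), smul_eq_mul, mul_one]
          · intro v _ hne
            have hmem : x ∉ A v.1 := fun hm => hne (Subtype.ext (show F x = v.1 from hm).symm)
            rw [SetLike.val_smul, Pi.smul_apply,
              show ((indCc (hAco v.1 v.2) : Cc X) : X → ℂ) = ind (A v.1) from rfl,
              ind_of_not_mem hmem, smul_zero]
          · intro hnm
            exact absurd (Finset.mem_attach _ _) hnm
      have hg_eq : ∀ i : ↥S, ((i : Cc X × Cc Y).2 : Cc Y) =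
          ∑ w ∈ VG.attach, (w.1 i) • indCc (hBco w.1 w.2) := by
        intro i
        apply Subtype.ext
        funext y
        rw [AddSubmonoidClass.coe_finset_sum, Finset.sum_apply]
        show G y i = _
        by_cases hy : G y = 0
        · rw [hy]
          show (0 : ℂ) = _
          symm
          apply Finset.sum_eq_zero
          intro w _
          have hmem : y ∉ B w.1 := fun hm =>
            (Finset.mem_erase.1 w.2).1 (by rw [← show G y = w.1 from hm, hy])
          rw [SetLike.val_smul, Pi.smul_apply,
            show ((indCc (hBco w.1 w.2) : Cc Y) : Y → ℂ) = ind (B w.1) from rfl,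
            ind_of_not_mem hmem, smul_zero]
        · rw [Finset.sum_eq_single (⟨G y, hvalG y hy⟩ : {w // w ∈ VG})]
          · rw [SetLike.val_smul, Pi.smul_apply,
              show ((indCc (hBco (G y) (hvalG y hy)) : Cc Y) : Y → ℂ) = ind (B (G y)) from rfl,
              ind_of_mem (show y ∈ B (G y) from rfl), smul_eq_mul, mul_one]
          · intro w _ hne
            have hmem : y ∉ B w.1 := fun hm => hne (Subtype.ext (show G y = w.1 from hm).symm)
            rw [SetLike.val_smul, Pi.smul_apply,
              show ((indCc (hBco w.1 w.2) : Cc Y) : Y → ℂ) = ind (B w.1) from rfl,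
              ind_of_not_mem hmem, smul_zero]
          · intro hnm
            exact absurd (Finset.mem_attach _ _) hnm
      have ht_eq : ∑ r ∈ S, r.1 ⊗ₜ[ℂ] r.2 = ∑ v ∈ VF.attach, ∑ w ∈ VG.attach,
          (∑ i ∈ S.attach, v.1 i * w.1 i) • (indCc (hAco v.1 v.2) ⊗ₜ[ℂ] indCc (hBco w.1 w.2)) := by
        rw [← Finset.sum_attach S (fun r => r.1 ⊗ₜ[ℂ] r.2)]
        have hterm : ∀ i : ↥S, ((i : Cc X × Cc Y).1) ⊗ₜ[ℂ] ((i : Cc X × Cc Y).2) = ∑ v ∈ VF.attach, ∑ w ∈ VG.attach,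
            (v.1 i * w.1 i) • (indCc (hAco v.1 v.2) ⊗ₜ[ℂ] indCc (hBco w.1 w.2)) := by
          intro i
          rw [hf_eq i, hg_eq i, TensorProduct.sum_tmul]
          refine Finset.sum_congr rfl fun v _ => ?_
          rw [TensorProduct.tmul_sum]
          exact Finset.sum_congr rfl fun w _ => TensorProduct.smul_tmul_smul _ _ _ _
        rw [Finset.sum_congr rfl fun i _ => hterm i]
        simp only [Finset.sum_smul]
        rw [Finset.sum_comm]
        exact Finset.sum_congr rfl fun v _ => Finset.sum_comm
      rw [LinearMap.mem_ker, ht_eq] at ht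
      simp only [map_sum, map_smul] at ht
      rw [ht_eq]
      refine Submodule.sum_mem _ fun v _ => Submodule.sum_mem _ fun w _ => ?_
      by_cases hne : ∃ u : {w : X × Y // p w.1 = q w.2}, u.1.1 ∈ A v.1 ∧ u.1.2 ∈ B w.1
      · obtain ⟨u, hu1, hu2⟩ := hne
        have hcvw : (∑ i ∈ S.attach, v.1 i * w.1 i) = 0 := by
          have h := congrFun ht u
          rw [Pi.zero_apply, Finset.sum_apply] at h
          rw [Finset.sum_eq_single v (fun v' _ hne' => ?_)
            (fun hnm => absurd (Finset.mem_attach _ _) hnm)] at h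
          · rw [Finset.sum_apply, Finset.sum_eq_single w (fun w' _ hne' => ?_)
              (fun hnm => absurd (Finset.mem_attach _ _) hnm)] at h
            · rw [Pi.smul_apply, smul_eq_mul,
                show fibMap X Y Z p q (indCc (hAco v.1 v.2) ⊗ₜ[ℂ] indCc (hBco w.1 w.2)) u =
                  ind (A v.1) u.1.1 * ind (B w.1) u.1.2 from rfl,
                ind_of_mem hu1, ind_of_mem hu2] at h
              simpa using h
            · have hmem : u.1.2 ∉ B w'.1 := fun hm => hne' (Subtype.ext
                ((show G u.1.2 = w'.1 from hm).symm.trans (show G u.1.2 = w.1 from hu2)))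
              rw [Pi.smul_apply,
                show fibMap X Y Z p q (indCc (hAco v.1 v.2) ⊗ₜ[ℂ] indCc (hBco w'.1 w'.2)) u =
                  ind (A v.1) u.1.1 * ind (B w'.1) u.1.2 from rfl,
                ind_of_not_mem hmem, mul_zero, smul_zero]
          · have hmem : u.1.1 ∉ A v'.1 := fun hm => hne' (Subtype.ext
              ((show F u.1.1 = v'.1 from hm).symm.trans (show F u.1.1 = v.1 from hu1)))
            rw [Finset.sum_apply]
            apply Finset.sum_eq_zero
            intro w' _
            rw [Pi.smul_apply,
              show fibMap X Y Z p q (indCc (hAco v'.1 v'.2) ⊗ₜ[ℂ] indCc (hBco w'.1 w'.2)) u =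
                ind (A v'.1) u.1.1 * ind (B w'.1) u.1.2 from rfl,
              ind_of_not_mem hmem, zero_mul, smul_zero]
        rw [hcvw, zero_smul]
        exact zero_mem _
      · push_neg at hne
        refine Submodule.smul_mem _ _ (tmul_ind_mem_balRel X Y Z p q hp hq
          (hAco v.1 v.2) (hBco w.1 w.2) ?_)
        intro x hx y hy hpq
        exact hne ⟨(x, y), hpq⟩ hx hy
    · rw [balRel, Submodule.span_le]
      rintro t ⟨f, g, h, rfl⟩
      simp only [SetLike.mem_coe, LinearMap.mem_ker, map_sub, sub_eq_zero]
      rw [fibMap_tmul, fibMap_tmul]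
      funext w
      show (f : X → ℂ) w.1.1 * (h : Z → ℂ) (p w.1.1) * (g : Y → ℂ) w.1.2 =
        (f : X → ℂ) w.1.1 * ((h : Z → ℂ) (q w.1.2) * (g : Y → ℂ) w.1.2)
      rw [← w.2]; ring
  · apply le_antisymm
    · rintro _ ⟨t, rfl⟩
      induction t using TensorProduct.induction_on with
      | zero => rw [map_zero]; exact zero_mem _
      | tmul f g => exact fibMap_tmul_mem_Cc X Y Z p q hp hq f g
      | add x y hx hy => rw [map_add]; exact add_mem hx hy
    · intro e he
      have hfin : (e '' tsupport e).Finite := finite_image_of_compact_closure he.1 he.2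
      set Vs : Finset ℂ := hfin.toFinset.erase 0 with hVs
      have hval : ∀ w, e w ≠ 0 → e w ∈ Vs := fun w hw =>
        Finset.mem_erase.2 ⟨hw, hfin.mem_toFinset.2 ⟨w, subset_tsupport _ hw, rfl⟩⟩
      have hdec : e = ∑ v ∈ Vs, v • ind (e ⁻¹' {v}) := by
        funext w
        rw [Finset.sum_apply]
        by_cases hw : e w = 0
        · rw [hw]
          symm
          apply Finset.sum_eq_zero
          intro v hv
          have hmem : w ∉ e ⁻¹' {v} := by
            intro hm
            have : e w = v := hm
            exact (Finset.mem_erase.1 hv).1 (by rw [← this, hw])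
          rw [Pi.smul_apply, ind_of_not_mem hmem, smul_zero]
        · rw [Finset.sum_eq_single (e w)]
          · rw [Pi.smul_apply, ind_of_mem (show w ∈ e ⁻¹' {e w} from rfl), smul_eq_mul, mul_one]
          · intro v _ hne
            have hmem : w ∉ e ⁻¹' {v} := fun hm => hne (show e w = v from hm).symm
            rw [Pi.smul_apply, ind_of_not_mem hmem, smul_zero]
          · intro hnm
            exact absurd (hval w hw) hnm
      rw [hdec]
      refine Submodule.sum_mem _ fun v hv => Submodule.smul_mem _ _ ?_
      have hvne : v ≠ 0 := (Finset.mem_erase.1 hv).1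
      have hop : IsOpen (e ⁻¹' {v}) := he.1.isOpen_fiber v
      have hcl : IsClosed (e ⁻¹' {v}) := he.1.isClosed_fiber v
      have hsubt : e ⁻¹' {v} ⊆ tsupport e := fun x hx =>
        subset_tsupport _ (Function.mem_support.2
          (by rw [show e x = v from hx]; exact hvne))
      exact ind_compactOpen_mem_range X Y Z p q (he.2.of_isClosed_subset hcl hsubt) hop
end

section
/- Let X, Y, Z be totally disconnected locally compact Hausdorff spaces with continuous maps p : X → Z, q : Y → Z. If U ⊆ X and V ⊆ Y are compact open subsets with p(U) ∩ q(V) = ∅, then there exists a compact open set E ⊆ Z with p(U) ⊆ E and E ∩ q(V) = ∅; consequently χ_U · (χ_E ∘ p) = χ_U and (χ_E ∘ q) · χ_V = 0, so the element χ_U ⊗ χ_V vanishes in the balanced tensor product C_c^∞(X) ⊗_{C_c^∞(Z)} C_c^∞(Y). -/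
open TensorProduct

variable (X Y Z : Type) [TopologicalSpace X] [TopologicalSpace Y] [TopologicalSpace Z]
  (p : X → Z) (q : Y → Z)

/-- The indicator of a clopen set is locally constant. -/
theorem isLocallyConstant_indicator_of_isClopen {Z : Type*} [TopologicalSpace Z] {E : Set Z}
    (hE : IsClopen E) : IsLocallyConstant (E.indicator fun _ => (1 : ℂ)) := by
  classical
  intro s
  have : (E.indicator (fun _ => (1 : ℂ))) ⁻¹' s =
      (if (1 : ℂ) ∈ s then E else ∅) ∪ (if (0 : ℂ) ∈ s then Eᶜ else ∅) := by
    ext z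
    by_cases hz : z ∈ E <;> by_cases h1 : (1 : ℂ) ∈ s <;> by_cases h0 : (0 : ℂ) ∈ s <;>
      simp [hz, h1, h0, Set.indicator_of_mem, Set.indicator_of_notMem]
  rw [this]
  apply IsOpen.union
  · split <;> [exact hE.2; exact isOpen_empty]
  · split <;> [exact hE.compl.2; exact isOpen_empty]

/-- In a locally compact Hausdorff totally disconnected space, a compact set contained in an
open set is contained in a compact open set contained in the open set. -/
theorem exists_isCompact_isOpen_between {H : Type*} [TopologicalSpace H] [T2Space H]
    [LocallyCompactSpace H] [TotallyDisconnectedSpace H] {K O : Set H}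
    (hK : IsCompact K) (hO : IsOpen O) (hKO : K ⊆ O) :
    ∃ E : Set H, IsCompact E ∧ IsOpen E ∧ K ⊆ E ∧ E ⊆ O := by
  have hx : ∀ x ∈ K, ∃ W : Set H, IsCompact W ∧ IsOpen W ∧ x ∈ W ∧ W ⊆ O := by
    intro x hxK
    obtain ⟨s, scomp, hxs, hsO⟩ := exists_compact_subset hO (hKO hxK)
    obtain ⟨W, hWclopen, hxW, hWs⟩ :=
      loc_compact_Haus_tot_disc_of_zero_dim.mem_nhds_iff.1 (isOpen_interior.mem_nhds hxs)
    exact ⟨W, scomp.of_isClosed_subset hWclopen.1 (hWs.trans interior_subset),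
      hWclopen.2, hxW, (hWs.trans interior_subset).trans hsO⟩
  choose! W hWc hWo hWm hWO using hx
  obtain ⟨t, htK, htcov⟩ := hK.elim_nhds_subcover W fun x hxK => (hWo x hxK).mem_nhds (hWm x hxK)
  refine ⟨⋃ x ∈ t, W x, ?_, ?_, htcov, ?_⟩
  · exact t.isCompact_biUnion fun x hx => hWc x (htK x hx)
  · exact isOpen_biUnion fun x hx => hWo x (htK x hx)
  · exact Set.iUnion₂_subset fun x hx => hWO x (htK x hx)

set_option synthInstance.maxHeartbeats 1000000 in
theorem sub_zero_aux {X Y : Type} [TopologicalSpace X] [TopologicalSpace Y]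
    (t s : Cc X ⊗[ℂ] Cc Y) (h : s = 0) : t = t - s := by rw [h]; exact (sub_zero t).symm

/-- If `U ⊆ X` and `V ⊆ Y` are compact open with `p(U) ∩ q(V) = ∅`, then there is a compact
open `E ⊆ Z` with `p(U) ⊆ E` and `E ∩ q(V) = ∅`; consequently `χ_U · (χ_E ∘ p) = χ_U` and
`(χ_E ∘ q) · χ_V = 0`, so `χ_U ⊗ χ_V` vanishes in the balanced tensor product
`C_c^∞(X) ⊗_{C_c^∞(Z)} C_c^∞(Y)`, i.e. lies in the balancing relation submodule. -/
theorem stmt_8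
    [T2Space X] [LocallyCompactSpace X] [TotallyDisconnectedSpace X]
    [T2Space Y] [LocallyCompactSpace Y] [TotallyDisconnectedSpace Y]
    [T2Space Z] [LocallyCompactSpace Z] [TotallyDisconnectedSpace Z]
    (hp : Continuous p) (hq : Continuous q)
    (U : Set X) (hUc : IsCompact U) (hUo : IsOpen U)
    (V : Set Y) (hVc : IsCompact V) (hVo : IsOpen V)
    (hdisj : p '' U ∩ q '' V = ∅)
    (χU : Cc X) (hχU : (χU : X → ℂ) = U.indicator fun _ => 1)
    (χV : Cc Y) (hχV : (χV : Y → ℂ) = V.indicator fun _ => 1) :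
    ∃ E : Set Z, IsCompact E ∧ IsOpen E ∧ p '' U ⊆ E ∧ E ∩ q '' V = ∅ ∧
      (U.indicator (fun _ => (1 : ℂ)) * fun x => E.indicator (fun _ => (1 : ℂ)) (p x))
        = U.indicator (fun _ => (1 : ℂ)) ∧
      ((fun y => E.indicator (fun _ => (1 : ℂ)) (q y)) * V.indicator fun _ => (1 : ℂ)) = 0 ∧
      χU ⊗ₜ[ℂ] χV ∈ balRel X Y Z p q hp hq := by
  classical
  -- `q '' V` is compact, hence closed; its complement is open and contains `p '' U`
  have hKc : IsCompact (p '' U) := hUc.image hp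
  have hqVc : IsCompact (q '' V) := hVc.image hq
  have hO : IsOpen (q '' V)ᶜ := hqVc.isClosed.isOpen_compl
  have hKO : p '' U ⊆ (q '' V)ᶜ := by
    intro z hz hz'
    have : z ∈ p '' U ∩ q '' V := ⟨hz, hz'⟩
    rw [hdisj] at this
    exact this
  obtain ⟨E, hEc, hEo, hKE, hEO⟩ := exists_isCompact_isOpen_between hKc hO hKO
  have hEqV : E ∩ q '' V = ∅ := by
    apply Set.eq_empty_iff_forall_notMem.2
    rintro z ⟨hz1, hz2⟩
    exact hEO hz1 hz2
  have hEclopen : IsClopen E := ⟨hEc.isClosed, hEo⟩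
  -- first function identity
  have eq1 : (U.indicator (fun _ => (1 : ℂ)) * fun x => E.indicator (fun _ => (1 : ℂ)) (p x))
      = U.indicator (fun _ => (1 : ℂ)) := by
    funext x
    by_cases hx : x ∈ U
    · have hpx : p x ∈ E := hKE ⟨x, hx, rfl⟩
      simp [hx, hpx]
    · simp [hx]
  -- second function identity
  have eq2 : ((fun y => E.indicator (fun _ => (1 : ℂ)) (q y)) * V.indicator fun _ => (1 : ℂ))
      = 0 := by
    funext y
    by_cases hy : y ∈ V
    · have hqy : q y ∉ E := fun h => hEO h ⟨y, hy, rfl⟩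
      simp [hqy]
    · simp [hy]
  -- the element χ_E of C_c^∞(Z)
  have hEsupp : HasCompactSupport (E.indicator fun _ => (1 : ℂ)) :=
    HasCompactSupport.intro hEc fun z hz => Set.indicator_of_notMem hz _
  let χE : Cc Z := ⟨E.indicator fun _ => (1 : ℂ),
    isLocallyConstant_indicator_of_isClopen hEclopen, hEsupp⟩
  refine ⟨E, hEc, hEo, hKE, hEqV, eq1, eq2, ?_⟩
  apply Submodule.subset_span
  refine ⟨χU, χV, χE, ?_⟩
  have h1 : pmul X Z p hp χU χE = χU := by
    apply Subtype.ext
    show (χU : X → ℂ) * (fun x => (χE : Z → ℂ) (p x)) = (χU : X → ℂ)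
    rw [hχU]
    exact eq1
  have h2 : qmul Y Z q hq χE χV = 0 := by
    apply Subtype.ext
    show (fun y => (χE : Z → ℂ) (q y)) * (χV : Y → ℂ) = 0
    rw [hχV]
    exact eq2
  rw [h1, h2]
  exact sub_zero_aux _ _ (tmul_zero _ χU)
end

section
/- Every paracompact totally disconnected locally compact Hausdorff space can be written as a disjoint union of a family of compact open subsets. -/
open Set Topology

variable {X : Type} [TopologicalSpace X] [T2Space X] [LocallyCompactSpace X]
    [TotallyDisconnectedSpace X]

/-- In a loc. compact t2 tot. disconnected space, compact open sets form a neighborhood basis. -/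
lemma aux_compact_open_nhd {x : X} {U : Set X} (hU : IsOpen U) (hx : x ∈ U) :
    ∃ K : Set X, IsCompact K ∧ IsOpen K ∧ x ∈ K ∧ K ⊆ U := by
  obtain ⟨s, hs, hxs, hsU⟩ := exists_compact_subset hU hx
  obtain ⟨V, hV, hxV, hVs⟩ := loc_compact_Haus_tot_disc_of_zero_dim.mem_nhds_iff.1
    (isOpen_interior.mem_nhds hxs)
  exact ⟨V, hs.of_isClosed_subset hV.1 (hVs.trans interior_subset), hV.2, hxV,
    (hVs.trans interior_subset).trans hsU⟩

/-- sandwich: any compact subset of an open set is contained in a compact open one. -/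
lemma aux_sandwich {C W : Set X} (hW : IsOpen W) (hC : IsCompact C) (hCW : C ⊆ W) :
    ∃ L : Set X, IsCompact L ∧ IsOpen L ∧ C ⊆ L ∧ L ⊆ W := by
  have h : ∀ x : C, ∃ K : Set X, IsCompact K ∧ IsOpen K ∧ (x : X) ∈ K ∧ K ⊆ W :=
    fun x => aux_compact_open_nhd hW (hCW x.2)
  choose K hKc hKo hxK hKW using h
  obtain ⟨t, ht⟩ := hC.elim_finite_subcover K hKo
    (fun x hx => mem_iUnion.2 ⟨⟨x, hx⟩, hxK _⟩)
  exact ⟨⋃ x ∈ t, K x, t.isCompact_biUnion (fun x _ => hKc x),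
    isOpen_biUnion fun x _ => hKo x, ht, iUnion₂_subset fun x _ => hKW x⟩

/-- exhaustion of a countable union of compacts inside an open set. -/
lemma aux_exhaust {W : Set X} (hW : IsOpen W) (C : ℕ → Set X)
    (hC : ∀ n, IsCompact (C n)) (hCW : ∀ n, C n ⊆ W) (hUn : ⋃ n, C n = W) :
    ∃ D : ℕ → Set X, (∀ n, IsCompact (D n) ∧ IsOpen (D n) ∧ D n ⊆ W) ∧
      Pairwise (fun m n => Disjoint (D m) (D n)) ∧ ⋃ n, D n = W := by
  have sw : ∀ A : Set X, ∃ L : Set X,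
      IsCompact A → A ⊆ W → IsCompact L ∧ IsOpen L ∧ A ⊆ L ∧ L ⊆ W := by
    intro A
    by_cases h : IsCompact A ∧ A ⊆ W
    · obtain ⟨L, hL⟩ := aux_sandwich hW h.1 h.2
      exact ⟨L, fun _ _ => hL⟩
    · exact ⟨∅, fun h1 h2 => absurd ⟨h1, h2⟩ h⟩
  choose g hg using sw
  set L : ℕ → Set X := fun n => Nat.rec (g (C 0)) (fun n Ln => g (Ln ∪ C (n + 1))) n with hLdef
  have hL : ∀ n, IsCompact (L n) ∧ IsOpen (L n) ∧ L n ⊆ W ∧ C n ⊆ L n := by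
    intro n
    induction n with
    | zero =>
      obtain ⟨h1, h2, h3, h4⟩ := hg (C 0) (hC 0) (hCW 0)
      exact ⟨h1, h2, h4, h3⟩
    | succ n ih =>
      obtain ⟨h1, h2, h3, h4⟩ := hg (L n ∪ C (n + 1)) (ih.1.union (hC (n + 1)))
        (union_subset ih.2.2.1 (hCW (n + 1)))
      exact ⟨h1, h2, h4, (subset_union_right).trans h3⟩
  set D : ℕ → Set X := fun n => L n \ ⋃ m, ⋃ _ : m < n, L m with hDdef
  have hprev_open : ∀ n : ℕ, IsOpen (⋃ m, ⋃ _ : m < n, L m) :=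
    fun n => isOpen_iUnion fun m => isOpen_iUnion fun _ => (hL m).2.1
  have hprev_cpt : ∀ n : ℕ, IsCompact (⋃ m, ⋃ _ : m < n, L m) := by
    intro n
    have : (⋃ m, ⋃ _ : m < n, L m) = ⋃ m ∈ Finset.range n, L m := by
      simp [Finset.mem_range]
    rw [this]
    exact (Finset.range n).isCompact_biUnion fun m _ => (hL m).1
  refine ⟨D, fun n => ?_, fun m n hmn => ?_, ?_⟩
  · refine ⟨(hL n).1.of_isClosed_subset ((hL n).1.isClosed.inter
      (hprev_open n).isClosed_compl) diff_subset, ?_, diff_subset.trans (hL n).2.2.1⟩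
    exact (hL n).2.1.inter (hprev_cpt n).isClosed.isOpen_compl
  · rcases hmn.lt_or_gt with h | h
    · exact Set.disjoint_left.2 fun x hx hx' =>
        hx'.2 (mem_iUnion.2 ⟨m, mem_iUnion.2 ⟨h, hx.1⟩⟩)
    · exact Set.disjoint_left.2 fun x hx hx' =>
        hx.2 (mem_iUnion.2 ⟨n, mem_iUnion.2 ⟨h, hx'.1⟩⟩)
  · apply subset_antisymm
    · exact iUnion_subset fun n => diff_subset.trans (hL n).2.2.1
    · intro x hx
      have hxL : ∃ n, x ∈ L n := by
        rw [← hUn] at hx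
        obtain ⟨n, hn⟩ := mem_iUnion.1 hx
        exact ⟨n, (hL n).2.2.2 hn⟩
      classical
      let n₀ := Nat.find hxL
      refine mem_iUnion.2 ⟨n₀, Nat.find_spec hxL, fun hmem => ?_⟩
      obtain ⟨m, hm⟩ := mem_iUnion.1 hmem
      obtain ⟨hmlt, hxm⟩ := mem_iUnion.1 hm
      exact Nat.find_min hxL hmlt hxm

/-- reachable sets in finite-degree graphs are countable -/
lemma aux_countable_reach {ι : Type} (r : ι → ι → Prop) (hfin : ∀ a, {b | r a b}.Finite)
    (a₀ : ι) : {b | Relation.ReflTransGen r a₀ b}.Countable := by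
  set N : ℕ → Set ι := fun n => Nat.rec {a₀} (fun _ Nn => Nn ∪ ⋃ a ∈ Nn, {b | r a b}) n with hN
  have hNfin : ∀ n, (N n).Finite := by
    intro n
    induction n with
    | zero => exact finite_singleton a₀
    | succ n ih => exact ih.union (ih.biUnion fun a _ => hfin a)
  have hsub : {b | Relation.ReflTransGen r a₀ b} ⊆ ⋃ n, N n := by
    intro b hb
    induction hb with
    | refl => exact mem_iUnion.2 ⟨0, rfl⟩
    | tail h hr ih =>
      obtain ⟨n, hn⟩ := mem_iUnion.1 ih
      exact mem_iUnion.2 ⟨n + 1, Or.inr (mem_iUnion₂.2 ⟨_, hn, hr⟩)⟩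
  exact (countable_iUnion fun n => (hNfin n).countable).mono hsub

/-- Every paracompact totally disconnected locally compact Hausdorff space is a disjoint
union of a family of compact open subsets. -/
theorem stmt_11 (X : Type) [TopologicalSpace X] [T2Space X] [LocallyCompactSpace X]
    [TotallyDisconnectedSpace X] [ParacompactSpace X] :
    ∃ (I : Type) (K : I → Set X),
      (∀ i, IsCompact (K i) ∧ IsOpen (K i)) ∧
      Pairwise (fun i j => Disjoint (K i) (K j)) ∧
      ⋃ i, K i = Set.univ := by
  classical
  have hK : ∀ x : X, ∃ K : Set X, IsCompact K ∧ IsOpen K ∧ x ∈ K ∧ K ⊆ univ :=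
    fun x => aux_compact_open_nhd isOpen_univ (mem_univ x)
  choose K hKc hKo hxK _ using hK
  obtain ⟨v, hvo, hvU, hvlf, hvK⟩ :=
    precise_refinement K hKo (iUnion_eq_univ_iff.2 fun x => ⟨x, hxK x⟩)
  have hcl : ∀ a, IsCompact (closure (v a)) := fun a =>
    (hKc a).of_isClosed_subset isClosed_closure (closure_minimal (hvK a) (hKc a).isClosed)
  set r : X → X → Prop := fun a b => (v a ∩ v b).Nonempty with hrdef
  have hrsymm : ∀ {a b}, r a b → r b a := fun {a b} h => by
    obtain ⟨x, hx1, hx2⟩ := h; exact ⟨x, hx2, hx1⟩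
  have hfin : ∀ a, {b | r a b}.Finite := by
    intro a
    refine (hvlf.finite_nonempty_inter_compact (hcl a)).subset fun b hb => ?_
    obtain ⟨x, hx1, hx2⟩ := hb
    exact ⟨x, hx2, subset_closure hx1⟩
  have hsymmRT : ∀ {a b}, Relation.ReflTransGen r a b → Relation.ReflTransGen r b a := by
    intro a b h
    induction h with
    | refl => exact .refl
    | tail _ hr ih => exact (Relation.ReflTransGen.single (hrsymm hr)).trans ih
  let st : Setoid X := ⟨fun a b => Relation.ReflTransGen r a b,
    ⟨fun a => .refl, hsymmRT, fun h1 h2 => h1.trans h2⟩⟩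
  let Q := Quotient st
  let S : Q → Set X := fun c => {a | Quotient.mk st a = c}
  let W : Q → Set X := fun c => ⋃ a ∈ S c, v a
  have hWo : ∀ c, IsOpen (W c) := fun c => isOpen_biUnion fun a _ => hvo a
  have hvsub : ∀ a, v a ⊆ W (Quotient.mk st a) := fun a =>
    subset_biUnion_of_mem (u := fun a => v a) rfl
  have hclin : ∀ a, closure (v a) ⊆ W (Quotient.mk st a) := by
    intro a x hx
    have hxU : x ∈ ⋃ b, v b := hvU ▸ mem_univ x
    obtain ⟨b, hb⟩ := mem_iUnion.1 hxU
    have hrba : r b a := mem_closure_iff.1 hx (v b) (hvo b) hb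
    have : Quotient.mk st b = Quotient.mk st a :=
      Quotient.sound (Relation.ReflTransGen.single hrba)
    exact mem_biUnion this hb
  have hWdisj : ∀ c c', c ≠ c' → Disjoint (W c) (W c') := by
    intro c c' hne
    rw [Set.disjoint_left]
    intro x hx hx'
    obtain ⟨a, ha, hxa⟩ := mem_iUnion₂.1 hx
    obtain ⟨b, hb, hxb⟩ := mem_iUnion₂.1 hx'
    have : Quotient.mk st a = Quotient.mk st b :=
      Quotient.sound (Relation.ReflTransGen.single ⟨x, hxa, hxb⟩)
    exact hne ((show Quotient.mk st a = c from ha).symm.trans (this.trans hb))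
  have main : ∀ c : Q, ∃ D : ℕ → Set X,
      (∀ n, IsCompact (D n) ∧ IsOpen (D n) ∧ D n ⊆ W c) ∧
      Pairwise (fun m n => Disjoint (D m) (D n)) ∧ ⋃ n, D n = W c := by
    intro c
    obtain ⟨a₀, ha₀⟩ := c.exists_rep
    have hSc : S c = {b | Relation.ReflTransGen r a₀ b} := by
      ext b
      constructor
      · intro hb
        exact hsymmRT (Quotient.exact ((show Quotient.mk st b = c from hb).trans ha₀.symm))
      · intro hb
        show Quotient.mk st b = c
        rw [← ha₀]
        exact Quotient.sound (hsymmRT hb)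
    have hScount : (S c).Countable := hSc ▸ aux_countable_reach r hfin a₀
    have hSne : (S c).Nonempty := ⟨a₀, ha₀⟩
    obtain ⟨f, hf⟩ := hScount.exists_eq_range hSne
    have hfS : ∀ n, f n ∈ S c := fun n => hf ▸ mem_range_self n
    refine aux_exhaust (hWo c) (fun n => closure (v (f n))) (fun n => hcl (f n))
      (fun n => (hfS n ▸ hclin (f n) : closure (v (f n)) ⊆ W c)) ?_
    apply subset_antisymm
    · exact iUnion_subset fun n => (hfS n ▸ hclin (f n) : closure (v (f n)) ⊆ W c)
    · intro x hx
      obtain ⟨a, ha, hxa⟩ := mem_iUnion₂.1 hx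
      have : a ∈ range f := hf ▸ ha
      obtain ⟨n, hn⟩ := this
      exact mem_iUnion.2 ⟨n, subset_closure (hn ▸ hxa : x ∈ v (f n))⟩
  choose D hD1 hD2 hD3 using main
  refine ⟨Q × ℕ, fun p => D p.1 p.2, fun p => ⟨(hD1 p.1 p.2).1, (hD1 p.1 p.2).2.1⟩, ?_, ?_⟩
  · rintro ⟨c, m⟩ ⟨c', n⟩ hne
    by_cases hcc : c = c'
    · subst hcc
      have hmn : m ≠ n := fun h => hne (by rw [h])
      exact hD2 c hmn
    · exact Set.disjoint_of_subset (hD1 c m).2.2 (hD1 c' n).2.2 (hWdisj c c' hcc)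
  · apply eq_univ_iff_forall.2
    intro x
    have hxU : x ∈ ⋃ b, v b := hvU ▸ mem_univ x
    obtain ⟨a, ha⟩ := mem_iUnion.1 hxU
    have : x ∈ W (Quotient.mk st a) := hvsub a ha
    rw [← hD3 (Quotient.mk st a)] at this
    obtain ⟨n, hn⟩ := mem_iUnion.1 this
    exact mem_iUnion.2 ⟨(Quotient.mk st a, n), hn⟩
end

section
/- Let G be an ample Hausdorff groupoid and let M ⊆ G be the set of loops G_ad = {α ∈ G : r(α) = s(α)}, which is a closed subset of G and hence totally disconnected locally compact Hausdorff. The formula T(f)(α, β) = f(α, αβ) defines a linear automorphism T of C_c^∞(G_ad ×_{π,r} G) (where π = r = s on G_ad) which is a bimodule map for both the pointwise C_c^∞(G_ad)-actions ((h·f)(α,β) = h(α)f(α,β) on the left, (f·h)(α,β) = h(β⁻¹αβ)f(α,β) on the right) and the convolution actions of the Steinberg algebra C_c^∞(G) on the left and right (given by (g·f)(α,β) = Σ_{γ ∈ G^{r(α)}} g(γ) f(γ⁻¹αγ, γ⁻¹β) and (f·g)(α,β) = Σ_{γ ∈ G_{s(β)}} f(α, βγ⁻¹) g(γ)). -/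
/-- An ample groupoid: a locally compact Hausdorff étale groupoid with totally disconnected
unit space, encoded as a type `G` of arrows with source and range maps `s, r : G → G`
(taking values in the unit space, identified with a subset of `G`), a partially defined
composition, and inversion; ampleness is encoded by the requirement that the compact open
bisections form a basis of the topology. -/
structure AmpleGroupoid (G : Type) [TopologicalSpace G] where
  s : G → G
  r : G → G
  mul : ∀ a b : G, s a = r b → G
  inv : G → G
  s_s : ∀ a, s (s a) = s a
  r_s : ∀ a, r (s a) = s a
  s_r : ∀ a, s (r a) = r a
  r_r : ∀ a, r (r a) = r a
  s_mul : ∀ a b h, s (mul a b h) = s b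
  r_mul : ∀ a b h, r (mul a b h) = r a
  mul_assoc : ∀ (a b c : G) (h1 : s a = r b) (h2 : s b = r c)
      (h3 : s (mul a b h1) = r c) (h4 : s a = r (mul b c h2)),
      mul (mul a b h1) c h3 = mul a (mul b c h2) h4
  s_inv : ∀ a, s (inv a) = r a
  r_inv : ∀ a, r (inv a) = s a
  unit_mul : ∀ (a : G) (h : s (r a) = r a), mul (r a) a h = a
  mul_unit : ∀ (a : G) (h : s a = r (s a)), mul a (s a) h = a
  inv_mul : ∀ (a : G) (h : s (inv a) = r a), mul (inv a) a h = s a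
  mul_inv : ∀ (a : G) (h : s a = r (inv a)), mul a (inv a) h = r a
  continuous_s : Continuous s
  continuous_r : Continuous r
  continuous_inv : Continuous inv
  continuous_mul : Continuous fun p : {p : G × G // s p.1 = r p.2} => mul p.1.1 p.1.2 p.2
  isOpen_units : IsOpen {x : G | s x = x}
  isBasis : TopologicalSpace.IsTopologicalBasis
      {U : Set G | IsCompact U ∧ IsOpen U ∧ Set.InjOn s U ∧ Set.InjOn r U}

namespace AmpleGroupoid

variable {G : Type} [TopologicalSpace G] (𝒢 : AmpleGroupoid G)

/-- The unit space `G⁰` of the groupoid. -/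
def units : Set G := {x : G | 𝒢.s x = x}

/-- The fibrewise integration map `λ(f)(x) = ∑_{α ∈ G^x} f(α)` on the unit space. -/
noncomputable def lam (f : G → ℂ) : 𝒢.units → ℂ :=
  fun x => ∑ᶠ (α : G) (_ : 𝒢.r α = (x : G)), f α

/-- The convolution product of the Steinberg algebra:
`(f * g)(α) = ∑_{β ∈ G^{r(α)}} f(β) g(β⁻¹α)`. -/
noncomputable def conv (f g : G → ℂ) : G → ℂ :=
  fun α => ∑ᶠ (β : G) (h : 𝒢.r β = 𝒢.r α),
    f β * g (𝒢.mul (𝒢.inv β) α ((𝒢.s_inv β).trans h))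

end AmpleGroupoid

namespace AmpleGroupoid

variable {G : Type} [TopologicalSpace G] (𝒢 : AmpleGroupoid G)

/-- The space `G_ad ×_{π,r} G` of pairs `(α, β)` with `α` a loop (`s(α) = r(α)`) and
`r(β) = r(α)`. -/
abbrev adPairs : Type := {p : G × G // 𝒢.s p.1 = 𝒢.r p.1 ∧ 𝒢.r p.2 = 𝒢.r p.1}

/-- The canonical map `T(f)(α, β) = f(α, αβ)`. -/
noncomputable def Tmap (f : 𝒢.adPairs → ℂ) : 𝒢.adPairs → ℂ :=
  fun w => f ⟨(w.1.1, 𝒢.mul w.1.1 w.1.2 (w.2.1.trans w.2.2.symm)),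
    ⟨w.2.1, 𝒢.r_mul _ _ _⟩⟩

/-- The left pointwise action of functions on `G_ad`: `(h·f)(α,β) = h(α) f(α,β)`. -/
noncomputable def actL (h : G → ℂ) (f : 𝒢.adPairs → ℂ) : 𝒢.adPairs → ℂ :=
  fun w => h w.1.1 * f w

/-- The right pointwise action of functions on `G_ad`:
`(f·h)(α,β) = h(β⁻¹αβ) f(α,β)`. -/
noncomputable def actR (f : 𝒢.adPairs → ℂ) (h : G → ℂ) : 𝒢.adPairs → ℂ :=
  fun w => h (𝒢.mul (𝒢.mul (𝒢.inv w.1.2) w.1.1 ((𝒢.s_inv w.1.2).trans w.2.2)) w.1.2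
      (by simp only [𝒢.s_mul]; exact w.2.1.trans w.2.2.symm)) * f w

/-- The left convolution action of the Steinberg algebra:
`(g·f)(α,β) = ∑_{γ ∈ G^{r(α)}} g(γ) f(γ⁻¹αγ, γ⁻¹β)`. -/
noncomputable def convL (g : G → ℂ) (f : 𝒢.adPairs → ℂ) : 𝒢.adPairs → ℂ :=
  fun w => ∑ᶠ (γ : G) (h : 𝒢.r γ = 𝒢.r w.1.1),
    g γ * f ⟨(𝒢.mul (𝒢.mul (𝒢.inv γ) w.1.1 ((𝒢.s_inv γ).trans h)) γ
                (by simp only [𝒢.s_mul]; exact w.2.1.trans h.symm),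
              𝒢.mul (𝒢.inv γ) w.1.2 ((𝒢.s_inv γ).trans (h.trans w.2.2.symm))),
             ⟨by simp only [𝒢.s_mul, 𝒢.r_mul, 𝒢.r_inv],
              by simp only [𝒢.s_mul, 𝒢.r_mul, 𝒢.r_inv]⟩⟩

/-- The right convolution action of the Steinberg algebra:
`(f·g)(α,β) = ∑_{γ ∈ G_{s(β)}} f(α, βγ⁻¹) g(γ)`. -/
noncomputable def convR (f : 𝒢.adPairs → ℂ) (g : G → ℂ) : 𝒢.adPairs → ℂ :=
  fun w => ∑ᶠ (γ : G) (h : 𝒢.s γ = 𝒢.s w.1.2),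
    f ⟨(w.1.1, 𝒢.mul w.1.2 (𝒢.inv γ) (by rw [𝒢.r_inv]; exact h.symm)),
       ⟨w.2.1, by simp only [𝒢.r_mul]; exact w.2.2⟩⟩ * g γ

end AmpleGroupoid

namespace AmpleGroupoid

variable {G : Type} [TopologicalSpace G] (𝒢 : AmpleGroupoid G)

omit [TopologicalSpace G] in
theorem pair_congr {a a' b b' : G} (h1 : a = a') (h2 : b = b') :
    (a, b) = (a', b') := by rw [h1, h2]

theorem mul_congr' {a a' b b' : G} (ha : a = a') (hb : b = b')
    (h : 𝒢.s a = 𝒢.r b) (h' : 𝒢.s a' = 𝒢.r b') :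
    𝒢.mul a b h = 𝒢.mul a' b' h' := by subst ha; subst hb; rfl

theorem cancelL (a b : G) (h : 𝒢.s a = 𝒢.r b)
    (h' : 𝒢.s (𝒢.inv a) = 𝒢.r (𝒢.mul a b h)) :
    𝒢.mul (𝒢.inv a) (𝒢.mul a b h) h' = b := by
  have h1 : 𝒢.s (𝒢.inv a) = 𝒢.r a := 𝒢.s_inv a
  have hh : 𝒢.s (𝒢.mul (𝒢.inv a) a h1) = 𝒢.r b := by rw [𝒢.s_mul]; exact h
  rw [← 𝒢.mul_assoc (𝒢.inv a) a b h1 h hh h']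
  calc 𝒢.mul (𝒢.mul (𝒢.inv a) a h1) b hh
      = 𝒢.mul (𝒢.r b) b (𝒢.s_r b) :=
        𝒢.mul_congr' ((𝒢.inv_mul a h1).trans h) rfl _ _
    _ = b := 𝒢.unit_mul b _

theorem cancelL' (a b : G) (h : 𝒢.s (𝒢.inv a) = 𝒢.r b)
    (h' : 𝒢.s a = 𝒢.r (𝒢.mul (𝒢.inv a) b h)) :
    𝒢.mul a (𝒢.mul (𝒢.inv a) b h) h' = b := by
  have h1 : 𝒢.s a = 𝒢.r (𝒢.inv a) := (𝒢.r_inv a).symm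
  have hh : 𝒢.s (𝒢.mul a (𝒢.inv a) h1) = 𝒢.r b := by rw [𝒢.s_mul]; exact h
  rw [← 𝒢.mul_assoc a (𝒢.inv a) b h1 h hh h']
  calc 𝒢.mul (𝒢.mul a (𝒢.inv a) h1) b hh
      = 𝒢.mul (𝒢.r b) b (𝒢.s_r b) :=
        𝒢.mul_congr' ((𝒢.mul_inv a h1).trans ((𝒢.s_inv a).symm.trans h)) rfl _ _
    _ = b := 𝒢.unit_mul b _

theorem inv_uniq (m x : G) (hx : 𝒢.s x = 𝒢.r m)
    (hm : 𝒢.mul x m hx = 𝒢.s m) : x = 𝒢.inv m := by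
  have h2 : 𝒢.s m = 𝒢.r (𝒢.inv m) := (𝒢.r_inv m).symm
  have h3 : 𝒢.s (𝒢.mul x m hx) = 𝒢.r (𝒢.inv m) := by rw [𝒢.s_mul]; exact h2
  have h4 : 𝒢.s x = 𝒢.r (𝒢.mul m (𝒢.inv m) h2) := by rw [𝒢.r_mul]; exact hx
  have assoc := 𝒢.mul_assoc x m (𝒢.inv m) hx h2 h3 h4
  have lhs : 𝒢.mul (𝒢.mul x m hx) (𝒢.inv m) h3 = 𝒢.inv m := by
    calc 𝒢.mul (𝒢.mul x m hx) (𝒢.inv m) h3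
        = 𝒢.mul (𝒢.r (𝒢.inv m)) (𝒢.inv m) (𝒢.s_r _) :=
          𝒢.mul_congr' (hm.trans (𝒢.r_inv m).symm) rfl _ _
      _ = 𝒢.inv m := 𝒢.unit_mul _ _
  have rhs : 𝒢.mul x (𝒢.mul m (𝒢.inv m) h2) h4 = x := by
    calc 𝒢.mul x (𝒢.mul m (𝒢.inv m) h2) h4
        = 𝒢.mul x (𝒢.s x) (𝒢.r_s x).symm :=
          𝒢.mul_congr' rfl ((𝒢.mul_inv m h2).trans hx.symm) _ _
      _ = x := 𝒢.mul_unit x _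
  rw [← lhs, assoc, rhs]

theorem inv_mul_rev (a b : G) (h : 𝒢.s a = 𝒢.r b)
    (h' : 𝒢.s (𝒢.inv b) = 𝒢.r (𝒢.inv a)) :
    𝒢.inv (𝒢.mul a b h) = 𝒢.mul (𝒢.inv b) (𝒢.inv a) h' := by
  symm
  apply 𝒢.inv_uniq (𝒢.mul a b h) _ (by rw [𝒢.s_mul, 𝒢.s_inv, 𝒢.r_mul])
  have p1 : 𝒢.s (𝒢.inv a) = 𝒢.r (𝒢.mul a b h) := by rw [𝒢.s_inv, 𝒢.r_mul]
  have p3 : 𝒢.s (𝒢.mul (𝒢.inv b) (𝒢.inv a) h') = 𝒢.r (𝒢.mul a b h) := by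
    rw [𝒢.s_mul, 𝒢.s_inv, 𝒢.r_mul]
  calc 𝒢.mul (𝒢.mul (𝒢.inv b) (𝒢.inv a) h') (𝒢.mul a b h) p3
      = 𝒢.mul (𝒢.inv b) (𝒢.mul (𝒢.inv a) (𝒢.mul a b h) p1)
          (by rw [𝒢.s_inv, 𝒢.r_mul, 𝒢.r_inv]; exact h.symm) := by
        apply 𝒢.mul_assoc
    _ = 𝒢.mul (𝒢.inv b) b ((𝒢.s_inv b)) :=
        𝒢.mul_congr' rfl (𝒢.cancelL a b h p1) _ _
    _ = 𝒢.s b := 𝒢.inv_mul b _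
    _ = 𝒢.s (𝒢.mul a b h) := (𝒢.s_mul a b h).symm

/-- `(γ⁻¹αγ)(γ⁻¹β) = γ⁻¹(αβ)`. -/
theorem key1 (a b c : G) (hab : 𝒢.s a = 𝒢.r b)
    (q1 : 𝒢.s (𝒢.inv c) = 𝒢.r a)
    (q2 : 𝒢.s (𝒢.mul (𝒢.inv c) a q1) = 𝒢.r c)
    (q3 : 𝒢.s (𝒢.inv c) = 𝒢.r b)
    (q4 : 𝒢.s (𝒢.mul (𝒢.mul (𝒢.inv c) a q1) c q2) = 𝒢.r (𝒢.mul (𝒢.inv c) b q3))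
    (q5 : 𝒢.s (𝒢.inv c) = 𝒢.r (𝒢.mul a b hab)) :
    𝒢.mul (𝒢.mul (𝒢.mul (𝒢.inv c) a q1) c q2) (𝒢.mul (𝒢.inv c) b q3) q4
      = 𝒢.mul (𝒢.inv c) (𝒢.mul a b hab) q5 := by
  have e1 : 𝒢.s c = 𝒢.r (𝒢.mul (𝒢.inv c) b q3) := by rw [𝒢.r_mul, 𝒢.r_inv]
  have e2 : 𝒢.s (𝒢.mul (𝒢.inv c) a q1) = 𝒢.r (𝒢.mul c (𝒢.mul (𝒢.inv c) b q3) e1) := by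
    rw [𝒢.r_mul]; exact q2
  calc 𝒢.mul (𝒢.mul (𝒢.mul (𝒢.inv c) a q1) c q2) (𝒢.mul (𝒢.inv c) b q3) q4
      = 𝒢.mul (𝒢.mul (𝒢.inv c) a q1) (𝒢.mul c (𝒢.mul (𝒢.inv c) b q3) e1) e2 := by
        apply 𝒢.mul_assoc
    _ = 𝒢.mul (𝒢.mul (𝒢.inv c) a q1) b (by rw [𝒢.s_mul]; exact hab) :=
        𝒢.mul_congr' rfl (𝒢.cancelL' c b q3 e1) _ _
    _ = 𝒢.mul (𝒢.inv c) (𝒢.mul a b hab) q5 := by apply 𝒢.mul_assoc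

/-- `(αβ)⁻¹ α (αβ) = β⁻¹ α β`. -/
theorem key2 (a b : G) (ha : 𝒢.s a = 𝒢.r a) (hb : 𝒢.r b = 𝒢.r a)
    (e : 𝒢.s a = 𝒢.r b)
    (p : 𝒢.s (𝒢.inv (𝒢.mul a b e)) = 𝒢.r a)
    (q : 𝒢.s (𝒢.mul (𝒢.inv (𝒢.mul a b e)) a p) = 𝒢.r (𝒢.mul a b e))
    (p' : 𝒢.s (𝒢.inv b) = 𝒢.r a)
    (q' : 𝒢.s (𝒢.mul (𝒢.inv b) a p') = 𝒢.r b) :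
    𝒢.mul (𝒢.mul (𝒢.inv (𝒢.mul a b e)) a p) (𝒢.mul a b e) q
      = 𝒢.mul (𝒢.mul (𝒢.inv b) a p') b q' := by
  have hba : 𝒢.s (𝒢.inv b) = 𝒢.r (𝒢.inv a) := by rw [𝒢.s_inv, 𝒢.r_inv]; exact hb.trans ha.symm
  have hrev := 𝒢.inv_mul_rev a b e hba
  have pa : 𝒢.s (𝒢.inv a) = 𝒢.r a := 𝒢.s_inv a
  have x_eq : 𝒢.mul (𝒢.inv (𝒢.mul a b e)) a p = 𝒢.inv b := by
    calc 𝒢.mul (𝒢.inv (𝒢.mul a b e)) a p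
        = 𝒢.mul (𝒢.mul (𝒢.inv b) (𝒢.inv a) hba) a
            (by rw [𝒢.s_mul, 𝒢.s_inv]) :=
          𝒢.mul_congr' hrev rfl _ _
      _ = 𝒢.mul (𝒢.inv b) (𝒢.mul (𝒢.inv a) a pa)
            (by rw [𝒢.r_mul, 𝒢.s_inv, 𝒢.r_inv]; exact hb.trans ha.symm) := by
          apply 𝒢.mul_assoc
      _ = 𝒢.mul (𝒢.inv b) (𝒢.s (𝒢.inv b))
            (by rw [𝒢.r_s, 𝒢.s_inv]) :=
          𝒢.mul_congr' rfl ((𝒢.inv_mul a pa).trans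
            (by rw [𝒢.s_inv]; exact ha.trans hb.symm)) _ _
      _ = 𝒢.inv b := 𝒢.mul_unit _ _
  calc 𝒢.mul (𝒢.mul (𝒢.inv (𝒢.mul a b e)) a p) (𝒢.mul a b e) q
      = 𝒢.mul (𝒢.inv b) (𝒢.mul a b e) (by rw [𝒢.s_inv, 𝒢.r_mul]; exact hb) :=
        𝒢.mul_congr' x_eq rfl _ _
    _ = 𝒢.mul (𝒢.mul (𝒢.inv b) a p') b q' := by
        symm; apply 𝒢.mul_assoc

/-- `T` as a homeomorphism of the pair space. -/
noncomputable def TEquiv : 𝒢.adPairs ≃ₜ 𝒢.adPairs where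
  toFun w := ⟨(w.1.1, 𝒢.mul w.1.1 w.1.2 (w.2.1.trans w.2.2.symm)),
    ⟨w.2.1, 𝒢.r_mul _ _ _⟩⟩
  invFun w := ⟨(w.1.1, 𝒢.mul (𝒢.inv w.1.1) w.1.2 ((𝒢.s_inv w.1.1).trans w.2.2.symm)),
    ⟨w.2.1, by rw [𝒢.r_mul, 𝒢.r_inv]; exact w.2.1⟩⟩
  left_inv w := by
    obtain ⟨⟨α, β⟩, hα, hβ⟩ := w
    exact Subtype.ext (congrArg (Prod.mk α) (𝒢.cancelL α β _ _))
  right_inv w := by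
    obtain ⟨⟨α, β⟩, hα, hβ⟩ := w
    exact Subtype.ext (congrArg (Prod.mk α) (𝒢.cancelL' α β _ _))
  continuous_toFun := by
    apply Continuous.subtype_mk
    refine Continuous.prodMk (continuous_fst.comp continuous_subtype_val) ?_
    have hj : Continuous (fun w : 𝒢.adPairs =>
        (⟨w.1, w.2.1.trans w.2.2.symm⟩ : {p : G × G // 𝒢.s p.1 = 𝒢.r p.2})) :=
      Continuous.subtype_mk continuous_subtype_val _
    exact 𝒢.continuous_mul.comp hj
  continuous_invFun := by
    apply Continuous.subtype_mk
    refine Continuous.prodMk (continuous_fst.comp continuous_subtype_val) ?_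
    have hj : Continuous (fun w : 𝒢.adPairs =>
        (⟨(𝒢.inv w.1.1, w.1.2), (𝒢.s_inv w.1.1).trans w.2.2.symm⟩ :
          {p : G × G // 𝒢.s p.1 = 𝒢.r p.2})) :=
      Continuous.subtype_mk (Continuous.prodMk (𝒢.continuous_inv.comp
        (continuous_fst.comp continuous_subtype_val))
        (continuous_snd.comp continuous_subtype_val)) _
    exact 𝒢.continuous_mul.comp hj

theorem Tmap_eq (f : 𝒢.adPairs → ℂ) : 𝒢.Tmap f = f ∘ 𝒢.TEquiv := rfl

end AmpleGroupoid

/-- The set `G_ad` of loops is closed in `G`, and the formula `T(f)(α,β) = f(α, αβ)`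
defines a linear automorphism of `C_c^∞(G_ad ×_{π,r} G)` which is a bimodule map for both
the pointwise actions of `C_c^∞(G_ad)` and the left and right convolution actions of the
Steinberg algebra `C_c^∞(G)`. -/
theorem stmt_15 (G : Type) [TopologicalSpace G] [T2Space G] [LocallyCompactSpace G]
    (𝒢 : AmpleGroupoid G) :
    IsClosed {α : G | 𝒢.r α = 𝒢.s α} ∧
    Function.Bijective 𝒢.Tmap ∧
    (∀ f g : 𝒢.adPairs → ℂ, 𝒢.Tmap (f + g) = 𝒢.Tmap f + 𝒢.Tmap g) ∧
    (∀ (a : ℂ) (f : 𝒢.adPairs → ℂ), 𝒢.Tmap (a • f) = a • 𝒢.Tmap f) ∧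
    (∀ f : 𝒢.adPairs → ℂ, (IsLocallyConstant f ∧ HasCompactSupport f) ↔
        (IsLocallyConstant (𝒢.Tmap f) ∧ HasCompactSupport (𝒢.Tmap f))) ∧
    (∀ (h : G → ℂ) (f : 𝒢.adPairs → ℂ), 𝒢.Tmap (𝒢.actL h f) = 𝒢.actL h (𝒢.Tmap f)) ∧
    (∀ (h : G → ℂ) (f : 𝒢.adPairs → ℂ), 𝒢.Tmap (𝒢.actR f h) = 𝒢.actR (𝒢.Tmap f) h) ∧
    (∀ (g : G → ℂ) (f : 𝒢.adPairs → ℂ), 𝒢.Tmap (𝒢.convL g f) = 𝒢.convL g (𝒢.Tmap f)) ∧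
    (∀ (g : G → ℂ) (f : 𝒢.adPairs → ℂ), 𝒢.Tmap (𝒢.convR f g) = 𝒢.convR (𝒢.Tmap f) g) := by
  refine ⟨isClosed_eq 𝒢.continuous_r 𝒢.continuous_s, ?_, ?_, ?_, ?_, ?_, ?_, ?_, ?_⟩
  · -- bijectivity
    apply Function.bijective_iff_has_inverse.mpr
    refine ⟨fun g => g ∘ 𝒢.TEquiv.symm, fun f => ?_, fun f => ?_⟩
    · funext w
      show f (𝒢.TEquiv (𝒢.TEquiv.symm w)) = f w
      exact congrArg f (𝒢.TEquiv.apply_symm_apply w)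
    · funext w
      show f (𝒢.TEquiv.symm (𝒢.TEquiv w)) = f w
      exact congrArg f (𝒢.TEquiv.symm_apply_apply w)
  · intro f g; rfl
  · intro a f; rfl
  · -- locally constant & compact support
    intro f
    constructor
    · rintro ⟨hl, hc⟩
      rw [𝒢.Tmap_eq]
      exact ⟨hl.comp_continuous 𝒢.TEquiv.continuous,
        hc.comp_homeomorph 𝒢.TEquiv⟩
    · rintro ⟨hl, hc⟩
      have hf : f = 𝒢.Tmap f ∘ 𝒢.TEquiv.symm := by
        funext w
        show f w = f (𝒢.TEquiv (𝒢.TEquiv.symm w))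
        exact (congrArg f (𝒢.TEquiv.apply_symm_apply w)).symm
      rw [hf]
      exact ⟨hl.comp_continuous 𝒢.TEquiv.symm.continuous,
        hc.comp_homeomorph 𝒢.TEquiv.symm⟩
  · intro h f; rfl
  · -- actR
    intro h f
    funext w
    obtain ⟨⟨α, β⟩, hα, hβ⟩ := w
    show h _ * f _ = h _ * f _
    congr 1
    exact congrArg h (𝒢.key2 α β hα hβ _ _ _ _ _)
  · -- convL
    intro g f
    funext w
    obtain ⟨⟨α, β⟩, hα, hβ⟩ := w
    show ∑ᶠ (γ : G) (h : 𝒢.r γ = 𝒢.r α), _ = ∑ᶠ (γ : G) (h : 𝒢.r γ = 𝒢.r α), _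
    apply finsum_congr; intro γ
    apply finsum_congr; intro h
    refine congrArg (fun z => g γ * f z) (Subtype.ext (AmpleGroupoid.pair_congr rfl ?_))
    exact (𝒢.key1 α β γ (hα.trans hβ.symm) _ _ _ _ _).symm
  · -- convR
    intro g f
    funext w
    obtain ⟨⟨α, β⟩, hα, hβ⟩ := w
    show ∑ᶠ (γ : G) (h : 𝒢.s γ = 𝒢.s _), _ = ∑ᶠ (γ : G) (h : 𝒢.s γ = 𝒢.s β), _
    apply finsum_congr; intro γ
    apply finsum_congr_Prop (by rw [𝒢.s_mul])
    intro h
    refine congrArg (fun z => f z * g γ) (Subtype.ext (AmpleGroupoid.pair_congr rfl ?_))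
    apply 𝒢.mul_assoc
end

section
/- Let G be a proper ample Hausdorff groupoid with paracompact orbit space and let c : G^(0) → [0,∞) be a locally constant cut-off function. Given a left G-orbit-indexed averaging: for any compact open bisection U ⊆ G and compact open V ⊆ G^(0), the identity λ(χ_U * (c∘s · χ_V∘r)) = λ(c∘s · χ_{U·V}∘r) holds in C_c^∞(G^(0)), where U·V = r(U ∩ s⁻¹(V)), λ is the fiberwise sum λ(f)(x) = Σ_{α ∈ G^x} f(α), and * is convolution in the Steinberg algebra. -/
/-- The averaging identity used to equivariantise `C_c^∞(G⁰)`-linear maps over a proper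
ample groupoid with locally constant cut-off function `c`: for a compact open bisection `U`
and a compact open `V ⊆ G⁰`,
`λ(χ_U * (c∘s · χ_V∘r)) = λ(c∘s · χ_{U·V}∘r)` in `C_c^∞(G⁰)`, where
`U·V = r(U ∩ s⁻¹(V))`. -/
theorem stmt_17 (G : Type) [TopologicalSpace G] [T2Space G] [LocallyCompactSpace G]
    (𝒢 : AmpleGroupoid G)
    (hproper : ∀ K : Set (G × G), IsCompact K → IsCompact {α : G | (𝒢.s α, 𝒢.r α) ∈ K})
    (c : 𝒢.units → ℝ) (hclc : IsLocallyConstant c) (hc0 : ∀ x, 0 ≤ c x)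
    (hcfin : ∀ x : 𝒢.units, {α : G | 𝒢.r α = (x : G) ∧ c ⟨𝒢.s α, 𝒢.s_s α⟩ ≠ 0}.Finite)
    (hcsum : ∀ x : 𝒢.units, ∑ᶠ (α : G) (_ : 𝒢.r α = (x : G)), c ⟨𝒢.s α, 𝒢.s_s α⟩ = 1)
    (hcprop : ∀ K : Set G, K ⊆ 𝒢.units → IsCompact K →
        IsCompact (closure {α : G | c ⟨𝒢.s α, 𝒢.s_s α⟩ ≠ 0} ∩ 𝒢.r ⁻¹' K))
    (U : Set G) (hUc : IsCompact U) (hUo : IsOpen U)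
    (hUs : Set.InjOn 𝒢.s U) (hUr : Set.InjOn 𝒢.r U)
    (V : Set G) (hV : V ⊆ 𝒢.units) (hVc : IsCompact V) (hVo : IsOpen V) :
    𝒢.lam (𝒢.conv (U.indicator fun _ => (1 : ℂ))
        (fun α => (c ⟨𝒢.s α, 𝒢.s_s α⟩ : ℂ) * V.indicator (fun _ => (1 : ℂ)) (𝒢.r α)))
      = 𝒢.lam (fun α => (c ⟨𝒢.s α, 𝒢.s_s α⟩ : ℂ) *
          (𝒢.r '' (U ∩ 𝒢.s ⁻¹' V)).indicator (fun _ => (1 : ℂ)) (𝒢.r α)) := by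

  classical
  have key : ∀ α : G, 𝒢.conv (U.indicator fun _ => (1 : ℂ))
      (fun α => (c ⟨𝒢.s α, 𝒢.s_s α⟩ : ℂ) * V.indicator (fun _ => (1 : ℂ)) (𝒢.r α)) α
      = (c ⟨𝒢.s α, 𝒢.s_s α⟩ : ℂ) *
        (𝒢.r '' (U ∩ 𝒢.s ⁻¹' V)).indicator (fun _ => (1 : ℂ)) (𝒢.r α) := by
    intro α
    rw [AmpleGroupoid.conv]
    have step : (∑ᶠ (β : G) (h : 𝒢.r β = 𝒢.r α),
        U.indicator (fun _ => (1 : ℂ)) β *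
          ((c ⟨𝒢.s (𝒢.mul (𝒢.inv β) α ((𝒢.s_inv β).trans h)),
              𝒢.s_s (𝒢.mul (𝒢.inv β) α ((𝒢.s_inv β).trans h))⟩ : ℂ) *
            V.indicator (fun _ => (1 : ℂ)) (𝒢.r (𝒢.mul (𝒢.inv β) α ((𝒢.s_inv β).trans h)))))
        = ∑ᶠ (β : G), {β' : G | 𝒢.r β' = 𝒢.r α}.indicator
            (fun β => U.indicator (fun _ => (1 : ℂ)) β *
              ((c ⟨𝒢.s α, 𝒢.s_s α⟩ : ℂ) * V.indicator (fun _ => (1 : ℂ)) (𝒢.s β))) β := by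
      refine finsum_congr fun β => ?_
      by_cases h : 𝒢.r β = 𝒢.r α
      · rw [Set.indicator_of_mem (show β ∈ {β' : G | 𝒢.r β' = 𝒢.r α} from h),
          finsum_eq_dif, dif_pos h]
        simp only [𝒢.s_mul, 𝒢.r_mul, 𝒢.r_inv]
      · rw [Set.indicator_of_notMem (show β ∉ {β' : G | 𝒢.r β' = 𝒢.r α} from h),
          finsum_eq_dif, dif_neg h]
    rw [step]
    by_cases hx : 𝒢.r α ∈ 𝒢.r '' (U ∩ 𝒢.s ⁻¹' V)
    · obtain ⟨β0, ⟨hβ0U, hβ0V⟩, hβ0r⟩ := hx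
      rw [finsum_eq_single _ β0]
      · rw [Set.indicator_of_mem (show β0 ∈ {β' : G | 𝒢.r β' = 𝒢.r α} from hβ0r),
          Set.indicator_of_mem hβ0U, Set.indicator_of_mem (show 𝒢.s β0 ∈ V from hβ0V),
          Set.indicator_of_mem (show 𝒢.r α ∈ 𝒢.r '' (U ∩ 𝒢.s ⁻¹' V) from ⟨β0, ⟨hβ0U, hβ0V⟩, hβ0r⟩)]
        ring
      · intro β hβ
        by_cases hβr : 𝒢.r β = 𝒢.r α
        · rw [Set.indicator_of_mem (show β ∈ {β' : G | 𝒢.r β' = 𝒢.r α} from hβr)]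
          by_cases hβU : β ∈ U
          · exact absurd (hUr hβU hβ0U (hβr.trans hβ0r.symm)) hβ
          · rw [Set.indicator_of_notMem hβU, zero_mul]
        · exact Set.indicator_of_notMem (show β ∉ {β' : G | 𝒢.r β' = 𝒢.r α} from hβr) _
    · rw [Set.indicator_of_notMem hx, mul_zero]
      refine finsum_eq_zero_of_forall_eq_zero fun β => ?_
      by_cases hβr : 𝒢.r β = 𝒢.r α
      · rw [Set.indicator_of_mem (show β ∈ {β' : G | 𝒢.r β' = 𝒢.r α} from hβr)]
        by_cases hβU : β ∈ U
        · by_cases hβV : 𝒢.s β ∈ V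
          · exact absurd ⟨β, ⟨hβU, hβV⟩, hβr⟩ hx
          · rw [Set.indicator_of_notMem hβV, mul_zero, mul_zero]
        · rw [Set.indicator_of_notMem hβU, zero_mul]
      · exact Set.indicator_of_notMem (show β ∉ {β' : G | 𝒢.r β' = 𝒢.r α} from hβr) _
  rw [funext key]
end

section
/- Let R be a commutative ring which is a filtered colimit of products of copies of a field (concretely, R = C_c^∞(Q) for a totally disconnected locally compact Hausdorff space Q, with pointwise multiplication), let m_x ⊆ R be the maximal ideal of functions vanishing at a point x ∈ Q, and for an essential R-module M set M_x = M / m_x·M. Then localization at x is exact: for every short exact sequence 0 → K → E → N → 0 of essential R-modules, the induced sequence 0 → K_x → E_x → N_x → 0 is exact. -/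
open TensorProduct

variable (Q : Type) [TopologicalSpace Q]

/-- Pointwise multiplication on `C_c^∞(Q)`. -/
noncomputable def cmul (f g : Cc Q) : Cc Q :=
  ⟨(f : Q → ℂ) * (g : Q → ℂ), ⟨f.2.1.mul g.2.1, f.2.2.mul_right⟩⟩

section Modules

variable {M : Type} [AddCommGroup M] [Module ℂ M]

/-- The localising submodule `m_x · M` of an `C_c^∞(Q)`-module `(M, ρ)` at a point `x`,
spanned by the elements `ρ(f)(m)` with `f(x) = 0`. -/
noncomputable def mIdealSMul (x : Q) (ρ : Cc Q →ₗ[ℂ] M →ₗ[ℂ] M) : Submodule ℂ M :=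
  Submodule.span ℂ {y : M | ∃ (f : Cc Q) (m : M), (f : Q → ℂ) x = 0 ∧ ρ f m = y}

/-- A `C_c^∞(Q)`-module `(M, ρ)` is essential if `C_c^∞(Q)·M = M`, i.e. every element is a
finite sum of elements `ρ(f)(m)`. -/
noncomputable def IsEssentialMod (ρ : Cc Q →ₗ[ℂ] M →ₗ[ℂ] M) : Prop :=
  ∀ m : M, m ∈ AddSubgroup.closure {y : M | ∃ (f : Cc Q) (m' : M), ρ f m' = y}

end Modules


section Aux

variable {Q}

/-- In a locally compact Hausdorff totally disconnected space, every compact set is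
contained in a compact clopen set. -/
theorem exists_isCompact_isClopen_superset [T2Space Q] [LocallyCompactSpace Q]
    [TotallyDisconnectedSpace Q] {K : Set Q} (hK : IsCompact K) :
    ∃ C : Set Q, IsCompact C ∧ IsClopen C ∧ K ⊆ C := by
  obtain ⟨L, hL, hKL⟩ := exists_compact_superset hK
  have hchoice : ∀ y : Q, ∃ V : Set Q, IsClopen V ∧ y ∈ V ∧ (y ∈ K → V ⊆ interior L) := by
    intro y
    by_cases hy : y ∈ K
    · obtain ⟨V, hV, hyV, hVL⟩ :=
        loc_compact_Haus_tot_disc_of_zero_dim.mem_nhds_iff.1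
          (isOpen_interior.mem_nhds (hKL hy))
      exact ⟨V, hV, hyV, fun _ => hVL⟩
    · exact ⟨Set.univ, isClopen_univ, Set.mem_univ y, fun h => absurd h hy⟩
  choose V hVclopen hVmem hVsub using hchoice
  obtain ⟨t, htK, hcover⟩ := hK.elim_nhds_subcover V
    (fun y _ => (hVclopen y).2.mem_nhds (hVmem y))
  refine ⟨⋃ y ∈ t, V y, ?_, ?_, hcover⟩
  · refine hL.of_isClosed_subset (Set.Finite.isClosed_biUnion t.finite_toSet
      fun y _ => (hVclopen y).1) ?_
    exact Set.iUnion₂_subset fun y hy => (hVsub y (htK y hy)).trans interior_subset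
  · exact Set.Finite.isClopen_biUnion t.finite_toSet fun y _ => hVclopen y

/-- Key topological fact: if `f ∈ C_c^∞(Q)` vanishes at `x`, there is `g ∈ C_c^∞(Q)`
vanishing at `x` with `g · f = f` (a locally-constant "local unit" for `f` avoiding `x`). -/
theorem exists_local_unit [T2Space Q] [LocallyCompactSpace Q] [TotallyDisconnectedSpace Q]
    (f : Cc Q) (x : Q) (hx : (f : Q → ℂ) x = 0) :
    ∃ g : Cc Q, (g : Q → ℂ) x = 0 ∧ cmul Q g f = f := by
  have hU : IsClopen ((f : Q → ℂ) ⁻¹' {0}) := f.2.1.isClopen_fiber 0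
  obtain ⟨C, hCcomp, hCclopen, hKC⟩ := exists_isCompact_isClopen_superset f.2.2
  set s : Set Q := C \ (f : Q → ℂ) ⁻¹' {0} with hs
  have hsclopen : IsClopen s := hCclopen.diff hU
  set g0 : Q → ℂ := s.indicator (fun _ => (1 : ℂ)) with hg0
  have hg0lc : IsLocallyConstant g0 := by
    intro T
    by_cases h1 : (1 : ℂ) ∈ T <;> by_cases h0 : (0 : ℂ) ∈ T
    · have : g0 ⁻¹' T = Set.univ := by
        ext y; simp only [Set.mem_preimage, Set.mem_univ, iff_true, hg0, Set.indicator]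
        split <;> assumption
      rw [this]; exact isOpen_univ
    · have : g0 ⁻¹' T = s := by
        ext y; simp only [Set.mem_preimage, hg0, Set.indicator]
        split <;> simp_all
      rw [this]; exact hsclopen.2
    · have : g0 ⁻¹' T = sᶜ := by
        ext y; simp only [Set.mem_preimage, Set.mem_compl_iff, hg0, Set.indicator]
        split <;> simp_all
      rw [this]; exact hsclopen.1.isOpen_compl
    · have : g0 ⁻¹' T = ∅ := by
        ext y; simp only [Set.mem_preimage, Set.mem_empty_iff_false, iff_false, hg0,
          Set.indicator]
        split <;> simp_all
      rw [this]; exact isOpen_empty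
  have hg0supp : HasCompactSupport g0 := by
    apply HasCompactSupport.intro hCcomp
    intro y hy
    have : y ∉ s := fun h => hy h.1
    simp [hg0, Set.indicator_of_notMem this]
  refine ⟨⟨g0, hg0lc, hg0supp⟩, ?_, ?_⟩
  · have : x ∉ s := fun h => h.2 hx
    simp [hg0, Set.indicator_of_notMem this]
  · apply Subtype.ext
    show g0 * (f : Q → ℂ) = (f : Q → ℂ)
    funext y
    by_cases hfy : (f : Q → ℂ) y = 0
    · simp [hfy]
    · have hyC : y ∈ C := hKC (subset_tsupport _ (by exact hfy))
      have hys : y ∈ s := ⟨hyC, hfy⟩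
      simp [hg0, Set.indicator_of_mem hys]

/-- cmul is commutative. -/
theorem cmul_comm (f g : Cc Q) : cmul Q f g = cmul Q g f :=
  Subtype.ext (mul_comm _ _)

/-- Every element of `m_x · M` admits a local unit in `m_x`. -/
theorem exists_local_unit_of_mem [T2Space Q] [LocallyCompactSpace Q]
    [TotallyDisconnectedSpace Q] {M : Type} [AddCommGroup M] [Module ℂ M]
    (ρ : Cc Q →ₗ[ℂ] M →ₗ[ℂ] M)
    (hρ : ∀ (f g : Cc Q) (m : M), ρ (cmul Q f g) m = ρ f (ρ g m)) (x : Q)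
    {m : M} (hm : m ∈ mIdealSMul Q x ρ) :
    ∃ f : Cc Q, (f : Q → ℂ) x = 0 ∧ ρ f m = m := by
  induction hm using Submodule.span_induction with
  | mem y hy =>
    obtain ⟨f, m', hfx, rfl⟩ := hy
    obtain ⟨g, hgx, hgf⟩ := exists_local_unit f x hfx
    exact ⟨g, hgx, by rw [← hρ, hgf]⟩
  | zero => exact ⟨0, rfl, by simp⟩
  | add y z hy hz ihy ihz =>
    obtain ⟨f1, hf1x, hf1⟩ := ihy
    obtain ⟨f2, hf2x, hf2⟩ := ihz
    refine ⟨f1 + f2 - cmul Q f1 f2, ?_, ?_⟩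
    · show (f1 : Q → ℂ) x + (f2 : Q → ℂ) x - ((f1 : Q → ℂ) x * (f2 : Q → ℂ) x) = 0
      rw [hf1x, hf2x]; ring
    · have key1 : ρ (cmul Q f1 f2) y = ρ f2 y := by
        rw [cmul_comm, hρ, hf1]
      have key2 : ρ (cmul Q f1 f2) z = ρ f1 z := by
        rw [hρ, hf2]
      simp only [map_sub, map_add, LinearMap.sub_apply, LinearMap.add_apply]
      rw [key1, key2, hf1, hf2]
      abel
  | smul c y hy ihy =>
    obtain ⟨f, hfx, hf⟩ := ihy
    exact ⟨f, hfx, by rw [map_smul, hf]⟩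

end Aux

/-- Localisation at a point `x ∈ Q` of the totally disconnected locally compact Hausdorff
space `Q` is exact on short exact sequences of essential `C_c^∞(Q)`-modules: the induced
sequence `0 → K_x → E_x → N_x → 0` of localisations `M_x = M/m_x·M` is exact.  The three
conclusions say exactly that the induced sequence of quotients is exact (injectivity of
`ι_x`, exactness at `E_x`, surjectivity of `π_x`). -/
theorem stmt_18 [T2Space Q] [LocallyCompactSpace Q] [TotallyDisconnectedSpace Q]
    (K E N : Type) [AddCommGroup K] [Module ℂ K] [AddCommGroup E] [Module ℂ E]
    [AddCommGroup N] [Module ℂ N]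
    (ρK : Cc Q →ₗ[ℂ] K →ₗ[ℂ] K) (ρE : Cc Q →ₗ[ℂ] E →ₗ[ℂ] E) (ρN : Cc Q →ₗ[ℂ] N →ₗ[ℂ] N)
    (hK : ∀ (f g : Cc Q) (m : K), ρK (cmul Q f g) m = ρK f (ρK g m))
    (hE : ∀ (f g : Cc Q) (m : E), ρE (cmul Q f g) m = ρE f (ρE g m))
    (hN : ∀ (f g : Cc Q) (m : N), ρN (cmul Q f g) m = ρN f (ρN g m))
    (eK : IsEssentialMod Q ρK) (eE : IsEssentialMod Q ρE) (eN : IsEssentialMod Q ρN)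
    (ι : K →ₗ[ℂ] E) (π : E →ₗ[ℂ] N)
    (hι : ∀ (f : Cc Q) (k : K), ι (ρK f k) = ρE f (ι k))
    (hπ : ∀ (f : Cc Q) (e : E), π (ρE f e) = ρN f (π e))
    (hinj : Function.Injective ι) (hsurj : Function.Surjective π)
    (hexact : LinearMap.range ι = LinearMap.ker π)
    (x : Q) :
    (∀ k : K, ι k ∈ mIdealSMul Q x ρE → k ∈ mIdealSMul Q x ρK) ∧
    (∀ e : E, π e ∈ mIdealSMul Q x ρN → ∃ k : K, e - ι k ∈ mIdealSMul Q x ρE) ∧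
    (∀ n : N, ∃ e : E, n - π e ∈ mIdealSMul Q x ρN) := by
  refine ⟨?_, ?_, ?_⟩
  · intro k hk
    obtain ⟨f, hfx, hf⟩ := exists_local_unit_of_mem ρE hE x hk
    have : ι (ρK f k) = ι k := by rw [hι, hf]
    have hkeq : ρK f k = k := hinj this
    exact hkeq ▸ Submodule.subset_span ⟨f, k, hfx, rfl⟩
  · intro e he
    obtain ⟨f, hfx, hf⟩ := exists_local_unit_of_mem ρN hN x he
    have hker : e - ρE f e ∈ LinearMap.ker π := by
      rw [LinearMap.mem_ker, map_sub, hπ, hf, sub_self]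
    rw [← hexact] at hker
    obtain ⟨k, hk⟩ := hker
    refine ⟨k, ?_⟩
    have : e - ι k = ρE f e := by rw [hk]; abel
    exact this ▸ Submodule.subset_span ⟨f, e, hfx, rfl⟩
  · intro n
    obtain ⟨e, he⟩ := hsurj n
    exact ⟨e, by rw [he, sub_self]; exact Submodule.zero_mem _⟩
end
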